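/- arXiv:1006.0151 — 8 statements merged into one kernel-verified Lean document; each statement's English description precedes it below -/
import Mathlib

section
/- For every n ≥ 1 and all Hermitian n×n complex matrices A and B, one has |log Tr e^A − log Tr e^B| ≤ ‖A − B‖, where e^M denotes the matrix exponential, Tr the trace, and ‖·‖ the operator norm. -/
open scoped Matrix.Norms.L2Operator

open Matrix NormedSpace

namespace LogTraceAux

variable {n : ℕ}

/-- The real part of a diagonal entry of `star U * C * U` is at most the operator norm of `C`,
when `U` is unitary. -/
lemma re_conj_entry_le (C : Matrix (Fin n) (Fin n) ℂ) {U : Matrix (Fin n) (Fin n) ℂ}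
    (hU : U ∈ Matrix.unitaryGroup (Fin n) ℂ) (i : Fin n) :
    ((star U * C * U) i i).re ≤ ‖C‖ := by
  set u : Fin n → ℂ := fun l => U l i with hu
  set x : EuclideanSpace ℂ (Fin n) := (WithLp.equiv 2 _).symm u with hx
  have hent : (star U * C * U) i i = dotProduct (star u) (C *ᵥ u) := by
    simp only [Matrix.mul_apply, dotProduct, Matrix.mulVec, Matrix.star_apply,
      Pi.star_apply, Finset.sum_mul, Finset.mul_sum, hu]
    rw [Finset.sum_comm]
    exact Finset.sum_congr rfl fun l _ => Finset.sum_congr rfl fun k _ => by ring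
  have hxnorm : ‖x‖ = 1 := by
    have h1 : (inner ℂ x x : ℂ) = 1 := by
      rw [hx, EuclideanSpace.inner_toLp_toLp, dotProduct_comm]
      change dotProduct (star u) u = 1
      have h2 : dotProduct (star u) u = (star U * U) i i := by
        simp [Matrix.mul_apply, dotProduct, Matrix.star_apply, hu]
      rw [h2, Matrix.mem_unitaryGroup_iff'.mp hU, Matrix.one_apply_eq]
    have h4 : (‖x‖ : ℝ)^2 = 1 := by
      have h5 := inner_self_eq_norm_sq (𝕜 := ℂ) x
      rw [h1] at h5
      simpa using h5.symm
    nlinarith [norm_nonneg x]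
  have key : ‖(star U * C * U) i i‖ ≤ ‖C‖ := by
    rw [hent]
    have h5 : dotProduct (star u) (C *ᵥ u) =
        (inner ℂ x ((WithLp.equiv 2 _).symm (C *ᵥ u)) : ℂ) := by
      rw [hx, EuclideanSpace.inner_toLp_toLp, dotProduct_comm]; rfl
    rw [h5]
    calc ‖(inner ℂ x ((WithLp.equiv 2 _).symm (C *ᵥ u)) : ℂ)‖
        ≤ ‖x‖ * ‖(WithLp.equiv 2 ((Fin n) → ℂ)).symm (C *ᵥ u)‖ := norm_inner_le_norm _ _
      _ ≤ ‖x‖ * (‖C‖ * ‖x‖) := by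
          gcongr
          · exact C.l2_opNorm_mulVec x
      _ = ‖C‖ := by rw [hxnorm]; ring
  calc ((star U * C * U) i i).re ≤ ‖(star U * C * U) i i‖ := Complex.re_le_norm _
    _ ≤ ‖C‖ := key

/-- `Re (Tr e^A) = ∑ exp (eigenvalues)` for Hermitian `A`. -/
lemma trace_exp_re (A : Matrix (Fin n) (Fin n) ℂ) (hA : A.IsHermitian) :
    (Matrix.trace (exp A)).re = ∑ i, Real.exp (hA.eigenvalues i) := by
  set U : Matrix (Fin n) (Fin n) ℂ := ↑hA.eigenvectorUnitary with hUdef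
  have hUmem : U ∈ Matrix.unitaryGroup (Fin n) ℂ := hA.eigenvectorUnitary.2
  have hUul : star U * U = 1 := Matrix.mem_unitaryGroup_iff'.mp hUmem
  have hUur : U * star U = 1 := Matrix.mem_unitaryGroup_iff.mp hUmem
  have hUinv : U⁻¹ = star U := Matrix.inv_eq_left_inv hUul
  have hUisUnit : IsUnit U := ⟨⟨U, star U, hUur, hUul⟩, rfl⟩
  have hexp : exp A = U * exp (diagonal (RCLike.ofReal ∘ hA.eigenvalues)) * U⁻¹ := by
    conv_lhs => rw [hA.spectral_theorem, Unitary.conjStarAlgAut_apply, ← hUdef, ← hUinv]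
    exact Matrix.exp_conj U _ hUisUnit
  rw [hexp, Matrix.trace_mul_cycle, hUinv, hUul, Matrix.one_mul,
    Matrix.exp_diagonal, Matrix.trace_diagonal]
  rw [Complex.re_sum]
  refine Finset.sum_congr rfl fun i _ => ?_
  rw [Pi.exp_def, ← Complex.exp_eq_exp_ℂ]
  exact Complex.exp_ofReal_re _

/-- The key comparison: Peierls-type inequality. -/
lemma sum_exp_eigenvalues_le (A B : Matrix (Fin n) (Fin n) ℂ)
    (hA : A.IsHermitian) (hB : B.IsHermitian) :
    ∑ i, Real.exp (hA.eigenvalues i) ≤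
      Real.exp ‖A - B‖ * ∑ j, Real.exp (hB.eigenvalues j) := by
  classical
  set t : ℝ := ‖A - B‖ with ht
  set U : Matrix (Fin n) (Fin n) ℂ := ↑hA.eigenvectorUnitary with hUdef
  set V : Matrix (Fin n) (Fin n) ℂ := ↑hB.eigenvectorUnitary with hVdef
  have hUmem : U ∈ Matrix.unitaryGroup (Fin n) ℂ := hA.eigenvectorUnitary.2
  have hVmem : V ∈ Matrix.unitaryGroup (Fin n) ℂ := hB.eigenvectorUnitary.2
  have hUul : star U * U = 1 := Matrix.mem_unitaryGroup_iff'.mp hUmem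
  have hUur : U * star U = 1 := Matrix.mem_unitaryGroup_iff.mp hUmem
  have hVul : star V * V = 1 := Matrix.mem_unitaryGroup_iff'.mp hVmem
  have hVur : V * star V = 1 := Matrix.mem_unitaryGroup_iff.mp hVmem
  set α : Fin n → ℝ := hA.eigenvalues with hα
  set β : Fin n → ℝ := hB.eigenvalues with hβ
  set W : Matrix (Fin n) (Fin n) ℂ := star V * U with hWdef
  have hsW : star W = star U * V := by rw [hWdef, star_star_mul]
  set w : Fin n → Fin n → ℝ := fun j i => Complex.normSq (W j i) with hw
  -- column sums of w are 1
  have hcol : ∀ i, ∑ j, w j i = 1 := by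
    intro i
    have hWW : star W * W = 1 := by
      rw [hsW, hWdef, mul_assoc, ← mul_assoc V, hVur, one_mul, hUul]
    have h1 : (star W * W) i i = ∑ j, ((w j i : ℝ) : ℂ) := by
      simp only [Matrix.mul_apply, Matrix.star_apply]
      refine Finset.sum_congr rfl fun j _ => ?_
      rw [hw]
      simp [Complex.star_def, mul_comm, Complex.mul_conj]
    have h2 : (∑ j, ((w j i : ℝ) : ℂ)) = 1 := by rw [← h1, hWW, Matrix.one_apply_eq]
    have h3 : ((∑ j, w j i : ℝ) : ℂ) = 1 := by push_cast; rw [h2]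
    exact_mod_cast h3
  -- row sums of w are 1
  have hrow : ∀ j, ∑ i, w j i = 1 := by
    intro j
    have hWW : W * star W = 1 := by
      rw [hsW, hWdef, mul_assoc, ← mul_assoc U, hUur, one_mul, hVul]
    have h1 : (W * star W) j j = ∑ i, ((w j i : ℝ) : ℂ) := by
      simp only [Matrix.mul_apply, Matrix.star_apply]
      refine Finset.sum_congr rfl fun i _ => ?_
      rw [hw]
      simp [Complex.star_def, Complex.mul_conj]
    have h2 : (∑ i, ((w j i : ℝ) : ℂ)) = 1 := by rw [← h1, hWW, Matrix.one_apply_eq]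
    have h3 : ((∑ i, w j i : ℝ) : ℂ) = 1 := by push_cast; rw [h2]
    exact_mod_cast h3
  -- (a) diagonal entries of star U * A * U
  have ha : ∀ i, ((star U * A * U) i i).re = α i := by
    intro i
    have hd := hA.conjStarAlgAut_star_eigenvectorUnitary
    rw [Unitary.conjStarAlgAut_apply, Unitary.coe_star, star_star] at hd
    rw [hUdef, hd, ← hα]
    simp [Matrix.diagonal_apply_eq]
  -- (b) diagonal entries of star U * B * U
  have hb : ∀ i, ((star U * B * U) i i).re = ∑ j, w j i * β j := by
    intro i
    have hBconj : star U * B * U = star W * diagonal (RCLike.ofReal ∘ β) * W := by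
      conv_lhs => rw [hB.spectral_theorem, Unitary.conjStarAlgAut_apply, ← hVdef, ← hβ]
      rw [hsW, hWdef]
      noncomm_ring
    rw [hBconj]
    have : ((star W * diagonal (RCLike.ofReal ∘ β) * W : Matrix (Fin n) (Fin n) ℂ)) i i
        = ∑ j, ((w j i * β j : ℝ) : ℂ) := by
      simp only [Matrix.mul_apply, Matrix.diagonal_apply, Matrix.star_apply,
        Finset.sum_mul, Finset.mul_sum]
      rw [Finset.sum_comm]
      refine Finset.sum_congr rfl fun j _ => ?_
      rw [Finset.sum_eq_single j (by intro k _ hk; simp [Ne.symm hk]) (by simp)]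
      simp only [if_pos rfl, Function.comp_apply, RCLike.ofReal_alg]
      rw [hw]
      have : (starRingEnd ℂ) (W j i) * W j i = (Complex.normSq (W j i) : ℂ) := by
        rw [mul_comm, Complex.mul_conj]
      push_cast
      calc star (W j i) * ((β j : ℂ) • (1:ℂ)) * W j i
          = (β j : ℂ) * ((starRingEnd ℂ) (W j i) * W j i) := by
            simp [Complex.star_def]; ring
        _ = (Complex.normSq (W j i) : ℂ) * (β j : ℂ) := by rw [this]; ring
    rw [this, Complex.re_sum]
    exact Finset.sum_congr rfl fun j _ => by rw [Complex.ofReal_re]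
  -- (c) eigenvalue bound
  have hc : ∀ i, α i ≤ (∑ j, w j i * β j) + t := by
    intro i
    have hsub : ((star U * (A - B) * U) i i).re ≤ t := re_conj_entry_le (A - B) hUmem i
    have hexp : (star U * (A - B) * U) i i = (star U * A * U) i i - (star U * B * U) i i := by
      rw [Matrix.mul_sub, Matrix.sub_mul, Matrix.sub_apply]
    rw [hexp, Complex.sub_re, ha, hb] at hsub
    linarith
  -- combine via Jensen
  have jensen : ∀ i, Real.exp (∑ j, w j i * β j) ≤ ∑ j, w j i * Real.exp (β j) := by
    intro i
    have := convexOn_exp.map_sum_le (t := Finset.univ) (w := fun j => w j i) (p := β)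
      (fun j _ => Complex.normSq_nonneg _) (hcol i) (fun j _ => Set.mem_univ _)
    simpa [smul_eq_mul] using this
  calc ∑ i, Real.exp (α i)
      ≤ ∑ i, Real.exp t * ∑ j, w j i * Real.exp (β j) := by
        refine Finset.sum_le_sum fun i _ => ?_
        calc Real.exp (α i) ≤ Real.exp ((∑ j, w j i * β j) + t) :=
              Real.exp_le_exp.2 (hc i)
          _ = Real.exp t * Real.exp (∑ j, w j i * β j) := by
              rw [Real.exp_add]; ring
          _ ≤ Real.exp t * ∑ j, w j i * Real.exp (β j) := by
              have := jensen i
              nlinarith [Real.exp_pos t]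
    _ = Real.exp t * ∑ j, (∑ i, w j i) * Real.exp (β j) := by
        rw [← Finset.mul_sum]
        congr 1
        rw [Finset.sum_comm]
        exact Finset.sum_congr rfl fun j _ => by rw [Finset.sum_mul]
    _ = Real.exp t * ∑ j, Real.exp (β j) := by
        congr 1
        exact Finset.sum_congr rfl fun j _ => by rw [hrow j, one_mul]

end LogTraceAux

/-- For every `n ≥ 1` and all Hermitian `n × n` complex matrices `A` and `B`,
`|log Tr e^A − log Tr e^B| ≤ ‖A − B‖`, where the norm is the `ℓ²` operator norm.
(Since `A`, `B` are Hermitian, the traces of their exponentials are positive reals,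
so we express them via the real part.) -/
theorem abs_log_trace_exp_sub_log_trace_exp_le
    (n : ℕ) (hn : 1 ≤ n) (A B : Matrix (Fin n) (Fin n) ℂ)
    (hA : A.IsHermitian) (hB : B.IsHermitian) :
    |Real.log (Matrix.trace (NormedSpace.exp A)).re -
      Real.log (Matrix.trace (NormedSpace.exp B)).re| ≤ ‖A - B‖ := by
  haveI : NeZero n := ⟨by omega⟩
  have hTA := LogTraceAux.trace_exp_re A hA
  have hTB := LogTraceAux.trace_exp_re B hB
  have hApos : 0 < ∑ i, Real.exp (hA.eigenvalues i) :=
    Finset.sum_pos (fun i _ => Real.exp_pos _) Finset.univ_nonempty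
  have hBpos : 0 < ∑ i, Real.exp (hB.eigenvalues i) :=
    Finset.sum_pos (fun i _ => Real.exp_pos _) Finset.univ_nonempty
  rw [hTA, hTB, abs_sub_le_iff]
  constructor
  · have hle := LogTraceAux.sum_exp_eigenvalues_le A B hA hB
    have := Real.log_le_log hApos hle
    rw [Real.log_mul (Real.exp_ne_zero _) (ne_of_gt hBpos), Real.log_exp] at this
    linarith
  · have hle := LogTraceAux.sum_exp_eigenvalues_le B A hB hA
    rw [norm_sub_rev] at hle
    have := Real.log_le_log hBpos hle
    rw [Real.log_mul (Real.exp_ne_zero _) (ne_of_gt hApos), Real.log_exp] at this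
    linarith
end

section
/- For every n ≥ 1 and all Hermitian n×n complex matrices A, B, C, one has log Tr e^A − log Tr e^{B/2} − log Tr e^{C/2} ≤ ‖A − (B+C)/2‖, where e^M denotes the matrix exponential, Tr the trace, and ‖·‖ the operator norm. -/
open scoped Matrix.Norms.L2Operator

namespace LogTraceExpAux

open Matrix NormedSpace

variable {m : Type*} [Fintype m] [DecidableEq m]

lemma exp_conj_unitary (U : Matrix.unitaryGroup m ℂ) (D : Matrix m m ℂ) :
    exp ((U : Matrix m m ℂ) * D * star (U : Matrix m m ℂ)) =
      (U : Matrix m m ℂ) * exp D * star (U : Matrix m m ℂ) := by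
  have h1 : star (U : Matrix m m ℂ) * (U : Matrix m m ℂ) = 1 := Unitary.coe_star_mul_self U
  have hU : IsUnit (U : Matrix m m ℂ) := ⟨Unitary.toUnits U, rfl⟩
  have hinv : (U : Matrix m m ℂ)⁻¹ = star (U : Matrix m m ℂ) := Matrix.inv_eq_left_inv h1
  rw [← hinv, Matrix.exp_conj _ _ hU]

lemma exp_diagonal_ofReal (d : m → ℝ) :
    exp (diagonal (fun i => (d i : ℂ))) = diagonal (fun i => ((Real.exp (d i) : ℝ) : ℂ)) := by
  rw [Matrix.exp_diagonal]
  funext i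
  simp [Pi.exp_def, ← Complex.exp_eq_exp_ℂ, ← Complex.ofReal_exp]

lemma exp_spectral {A : Matrix m m ℂ} (hA : A.IsHermitian) :
    exp A = (hA.eigenvectorUnitary : Matrix m m ℂ)
      * diagonal (fun i => ((Real.exp (hA.eigenvalues i) : ℝ) : ℂ))
      * star (hA.eigenvectorUnitary : Matrix m m ℂ) := by
  have hcomp : (RCLike.ofReal ∘ hA.eigenvalues : m → ℂ) = fun i => (hA.eigenvalues i : ℂ) := by
    funext i; simp [Function.comp]
  conv_lhs => rw [hA.spectral_theorem, hcomp]; simp only [Unitary.conjStarAlgAut_apply, Unitary.coe_star]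
  rw [exp_conj_unitary, exp_diagonal_ofReal]

lemma conj_diag_entry (U : Matrix m m ℂ) (d : m → ℝ) (i : m) :
    ((U * diagonal (fun j => (d j : ℂ)) * star U) i i).re
      = ∑ j, ‖U i j‖ ^ 2 * d j := by
  rw [Matrix.mul_apply, Complex.re_sum]
  refine Finset.sum_congr rfl fun j _ => ?_
  rw [Matrix.mul_diagonal, Matrix.star_apply]
  have h : U i j * (d j : ℂ) * star (U i j) = ((‖U i j‖ ^ 2 * d j : ℝ) : ℂ) := by
    rw [Complex.star_def]
    have h2 : U i j * (d j : ℂ) * (starRingEnd ℂ) (U i j)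
        = (U i j * (starRingEnd ℂ) (U i j)) * (d j : ℂ) := by ring
    rw [h2, Complex.mul_conj, Complex.normSq_eq_norm_sq]
    push_cast
    ring
  rw [h, Complex.ofReal_re]

lemma sum_sq_norm_row (U : Matrix.unitaryGroup m ℂ) (i : m) :
    ∑ j, ‖(U : Matrix m m ℂ) i j‖ ^ 2 = 1 := by
  have h := congrFun (congrFun (Unitary.coe_mul_star_self U) i) i
  rw [Matrix.one_apply_eq, Matrix.mul_apply] at h
  have h3 := congrArg Complex.re h
  rw [Complex.re_sum, Complex.one_re] at h3
  rw [← h3]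
  refine Finset.sum_congr rfl fun j _ => ?_
  rw [Unitary.coe_star, Matrix.star_apply, Complex.star_def, Complex.mul_conj, Complex.ofReal_re,
    Complex.normSq_eq_norm_sq]

lemma jensen_exp {w t : m → ℝ} (h0 : ∀ j, 0 ≤ w j) (h1 : ∑ j, w j = 1) :
    Real.exp (∑ j, w j * t j) ≤ ∑ j, w j * Real.exp (t j) := by
  simpa [smul_eq_mul] using
    convexOn_exp.map_sum_le (fun j _ => h0 j) h1 (fun j _ => Set.mem_univ (t j))

lemma re_entry_eq {A : Matrix m m ℂ} (hA : A.IsHermitian) (i : m) :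
    (A i i).re = ∑ j, ‖(hA.eigenvectorUnitary : Matrix m m ℂ) i j‖ ^ 2 * hA.eigenvalues j := by
  have hcomp : (RCLike.ofReal ∘ hA.eigenvalues : m → ℂ) = fun i => (hA.eigenvalues i : ℂ) := by
    funext i; simp [Function.comp]
  conv_lhs => rw [hA.spectral_theorem, hcomp]; simp only [Unitary.conjStarAlgAut_apply, Unitary.coe_star]
  exact conj_diag_entry _ _ i

lemma re_exp_entry_eq {A : Matrix m m ℂ} (hA : A.IsHermitian) (i : m) :
    ((exp A) i i).re
      = ∑ j, ‖(hA.eigenvectorUnitary : Matrix m m ℂ) i j‖ ^ 2 * Real.exp (hA.eigenvalues j) := by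
  rw [exp_spectral hA]
  exact conj_diag_entry _ _ i

lemma peierls {A : Matrix m m ℂ} (hA : A.IsHermitian) (i : m) :
    Real.exp ((A i i).re) ≤ ((exp A) i i).re := by
  rw [re_entry_eq hA i, re_exp_entry_eq hA i]
  exact jensen_exp (fun j => by positivity) (sum_sq_norm_row _ i)

lemma trace_exp_re_eq {A : Matrix m m ℂ} (hA : A.IsHermitian) :
    (trace (exp A)).re = ∑ i, Real.exp (hA.eigenvalues i) := by
  rw [exp_spectral hA, Matrix.trace_mul_cycle, Unitary.coe_star_mul_self, one_mul,
    Matrix.trace_diagonal, Complex.re_sum]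
  simp only [Complex.ofReal_re]

lemma trace_exp_pos [Nonempty m] {A : Matrix m m ℂ} (hA : A.IsHermitian) :
    0 < (trace (exp A)).re := by
  rw [trace_exp_re_eq hA]
  exact Finset.sum_pos (fun i _ => Real.exp_pos _) Finset.univ_nonempty

lemma trace_exp_conj (U : Matrix.unitaryGroup m ℂ) (X : Matrix m m ℂ) :
    trace (exp (star (U : Matrix m m ℂ) * X * (U : Matrix m m ℂ))) = trace (exp X) := by
  have h := exp_conj_unitary (star U) X
  rw [Unitary.coe_star, star_star] at h
  rw [h, Matrix.trace_mul_cycle, ← Unitary.coe_star, Unitary.coe_mul_star_self, one_mul]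

lemma re_entry_le_max [Nonempty m] {A : Matrix m m ℂ} (hA : A.IsHermitian) (i : m) :
    (A i i).re ≤ Finset.univ.sup' Finset.univ_nonempty hA.eigenvalues := by
  rw [re_entry_eq hA i]
  set M := Finset.univ.sup' Finset.univ_nonempty hA.eigenvalues with hM
  calc ∑ j, ‖(hA.eigenvectorUnitary : Matrix m m ℂ) i j‖ ^ 2 * hA.eigenvalues j
      ≤ ∑ j, ‖(hA.eigenvectorUnitary : Matrix m m ℂ) i j‖ ^ 2 * M := by
        refine Finset.sum_le_sum fun j _ => ?_
        exact mul_le_mul_of_nonneg_left (Finset.le_sup' _ (Finset.mem_univ j)) (by positivity)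
    _ = M := by rw [← Finset.sum_mul, sum_sq_norm_row, one_mul]

lemma conj_entry_eq_dot (U : Matrix m m ℂ) (X : Matrix m m ℂ) (i : m) :
    (star U * X * U) i i = dotProduct (star fun k => U k i) (X *ᵥ fun k => U k i) := by
  simp only [Matrix.mul_apply, Matrix.star_apply, dotProduct, Matrix.mulVec,
    Pi.star_apply, Finset.sum_mul, Finset.mul_sum]
  rw [Finset.sum_comm]
  refine Finset.sum_congr rfl fun k _ => Finset.sum_congr rfl fun l _ => by ring

end LogTraceExpAux

section MainProof
open Matrix NormedSpace LogTraceExpAux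

/-- For every `n ≥ 1` and all Hermitian `n × n` complex matrices `A`, `B`, `C`,
`log Tr e^A − log Tr e^{B/2} − log Tr e^{C/2} ≤ ‖A − (B + C)/2‖`, where the norm is the
`ℓ²` operator norm.  (Since the matrices are Hermitian, the traces of the exponentials are
positive reals, so we express them via the real part.) -/
theorem log_trace_exp_sub_log_trace_exp_half_le
    (n : ℕ) (hn : 1 ≤ n) (A B C : Matrix (Fin n) (Fin n) ℂ)
    (hA : A.IsHermitian) (hB : B.IsHermitian) (hC : C.IsHermitian) :
    Real.log (Matrix.trace (NormedSpace.exp A)).re -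
      Real.log (Matrix.trace (NormedSpace.exp ((2 : ℂ)⁻¹ • B))).re -
      Real.log (Matrix.trace (NormedSpace.exp ((2 : ℂ)⁻¹ • C))).re ≤
      ‖A - (2 : ℂ)⁻¹ • (B + C)‖ := by
  have hne : Nonempty (Fin n) := ⟨⟨0, hn⟩⟩
  set E : Matrix (Fin n) (Fin n) ℂ := A - (2 : ℂ)⁻¹ • (B + C) with hE
  have h2 : star ((2:ℂ)⁻¹) = (2:ℂ)⁻¹ := by simp
  have hDBh : ((2:ℂ)⁻¹ • B).IsHermitian := by
    rw [Matrix.IsHermitian, Matrix.conjTranspose_smul, hB.eq, h2]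
  have hDCh : ((2:ℂ)⁻¹ • C).IsHermitian := by
    rw [Matrix.IsHermitian, Matrix.conjTranspose_smul, hC.eq, h2]
  set U := hA.eigenvectorUnitary with hU
  set PB := star (U : Matrix (Fin n) (Fin n) ℂ) * ((2:ℂ)⁻¹ • B) * (U : Matrix (Fin n) (Fin n) ℂ)
    with hPBdef
  set PC := star (U : Matrix (Fin n) (Fin n) ℂ) * ((2:ℂ)⁻¹ • C) * (U : Matrix (Fin n) (Fin n) ℂ)
    with hPCdef
  have hPBh : PB.IsHermitian := Matrix.isHermitian_conjTranspose_mul_mul _ hDBh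
  have hPCh : PC.IsHermitian := Matrix.isHermitian_conjTranspose_mul_mul _ hDCh
  -- decomposition of the eigenvalues of A
  have hAdecomp : A = E + (2:ℂ)⁻¹ • B + (2:ℂ)⁻¹ • C := by
    rw [hE, smul_add]; abel
  have hsplit : star (U : Matrix (Fin n) (Fin n) ℂ) * A * (U : Matrix (Fin n) (Fin n) ℂ)
      = star (U : Matrix (Fin n) (Fin n) ℂ) * E * (U : Matrix (Fin n) (Fin n) ℂ) + PB + PC := by
    conv_lhs => rw [hAdecomp]
    rw [hPBdef, hPCdef]
    simp only [Matrix.mul_add, Matrix.add_mul]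
  have hentry : ∀ i, hA.eigenvalues i
      = ((star (U : Matrix (Fin n) (Fin n) ℂ) * E * (U : Matrix (Fin n) (Fin n) ℂ)) i i).re
        + (PB i i).re + (PC i i).re := by
    intro i
    have hd : star (U : Matrix (Fin n) (Fin n) ℂ) * A * (U : Matrix (Fin n) (Fin n) ℂ)
        = diagonal (RCLike.ofReal ∘ hA.eigenvalues) := by
      have := hA.conjStarAlgAut_star_eigenvectorUnitary
      simpa [Unitary.coe_star] using this
    have h1 := congrFun (congrFun (hd.symm.trans hsplit) i) i
    rw [Matrix.diagonal_apply_eq] at h1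
    have := congrArg Complex.re h1
    simpa using this
  -- bound for the E term
  have hEbound : ∀ i,
      ((star (U : Matrix (Fin n) (Fin n) ℂ) * E * (U : Matrix (Fin n) (Fin n) ℂ)) i i).re
        ≤ ‖E‖ := by
    intro i
    set x : EuclideanSpace ℂ (Fin n) := hA.eigenvectorBasis i with hx
    have hxnorm : ‖x‖ = 1 := hA.eigenvectorBasis.orthonormal.1 i
    have hcol : (fun k => (U : Matrix (Fin n) (Fin n) ℂ) k i) = ⇑x := by
      funext k; simp [hU, hx]
    rw [conj_entry_eq_dot, hcol]
    have hinner : (inner ℂ x ((EuclideanSpace.equiv (Fin n) ℂ).symm (E *ᵥ ⇑x)) : ℂ)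
        = dotProduct (star ⇑x) (E *ᵥ ⇑x) := by
        simp [PiLp.inner_apply, dotProduct, mul_comm]
    calc (dotProduct (star ⇑x) (E *ᵥ ⇑x)).re
        ≤ ‖dotProduct (star ⇑x) (E *ᵥ ⇑x)‖ :=
          Complex.re_le_norm _
      _ = ‖(inner ℂ x ((EuclideanSpace.equiv (Fin n) ℂ).symm (E *ᵥ ⇑x)) : ℂ)‖ := by rw [hinner]
      _ ≤ ‖x‖ * ‖(EuclideanSpace.equiv (Fin n) ℂ).symm (E *ᵥ ⇑x)‖ := norm_inner_le_norm _ _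
      _ ≤ ‖x‖ * (‖E‖ * ‖x‖) :=
          mul_le_mul_of_nonneg_left (Matrix.l2_opNorm_mulVec E x) (norm_nonneg x)
      _ = ‖E‖ := by rw [hxnorm]; ring
  -- bound for the C term
  set c : ℝ := Finset.univ.sup' Finset.univ_nonempty hPCh.eigenvalues with hc
  have hCbound : ∀ i, (PC i i).re ≤ c := fun i => re_entry_le_max hPCh i
  have hc2 : Real.exp c ≤ (Matrix.trace (exp ((2:ℂ)⁻¹ • C))).re := by
    obtain ⟨j0, -, hj0⟩ := Finset.exists_mem_eq_sup' Finset.univ_nonempty hPCh.eigenvalues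
    have hTr : (Matrix.trace (exp PC)).re = (Matrix.trace (exp ((2:ℂ)⁻¹ • C))).re :=
      congrArg Complex.re (trace_exp_conj U ((2:ℂ)⁻¹ • C))
    rw [← hTr, trace_exp_re_eq hPCh, hc, hj0]
    exact Finset.single_le_sum (fun j _ => (Real.exp_pos _).le) (Finset.mem_univ j0)
  -- positivity
  have hTApos : 0 < (Matrix.trace (exp A)).re := trace_exp_pos hA
  have hTBpos : 0 < (Matrix.trace (exp ((2:ℂ)⁻¹ • B))).re := trace_exp_pos hDBh
  have hTCpos : 0 < (Matrix.trace (exp ((2:ℂ)⁻¹ • C))).re := trace_exp_pos hDCh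
  -- main chain
  have hTBtr : (Matrix.trace (exp PB)).re = (Matrix.trace (exp ((2:ℂ)⁻¹ • B))).re :=
    congrArg Complex.re (trace_exp_conj U ((2:ℂ)⁻¹ • B))
  have htracePB : (Matrix.trace (exp PB)).re = ∑ i, ((exp PB) i i).re := by
    rw [Matrix.trace, Complex.re_sum]; rfl
  have hfinal : (Matrix.trace (exp A)).re
      ≤ Real.exp ‖E‖ * (Matrix.trace (exp ((2:ℂ)⁻¹ • C))).re
          * (Matrix.trace (exp ((2:ℂ)⁻¹ • B))).re := by
    rw [trace_exp_re_eq hA]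
    calc ∑ i, Real.exp (hA.eigenvalues i)
        ≤ ∑ i, Real.exp ‖E‖ * Real.exp c * ((exp PB) i i).re := by
          refine Finset.sum_le_sum fun i _ => ?_
          calc Real.exp (hA.eigenvalues i) ≤ Real.exp (‖E‖ + c + (PB i i).re) := by
                rw [Real.exp_le_exp, hentry i]
                have := hEbound i; have := hCbound i; linarith
            _ = Real.exp ‖E‖ * Real.exp c * Real.exp ((PB i i).re) := by
                rw [Real.exp_add, Real.exp_add]
            _ ≤ Real.exp ‖E‖ * Real.exp c * ((exp PB) i i).re :=
                mul_le_mul_of_nonneg_left (peierls hPBh i) (by positivity)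
      _ = Real.exp ‖E‖ * Real.exp c * (Matrix.trace (exp ((2:ℂ)⁻¹ • B))).re := by
          rw [← Finset.mul_sum, ← htracePB, hTBtr]
      _ ≤ Real.exp ‖E‖ * (Matrix.trace (exp ((2:ℂ)⁻¹ • C))).re
            * (Matrix.trace (exp ((2:ℂ)⁻¹ • B))).re := by
          have h1 : Real.exp ‖E‖ * Real.exp c ≤
              Real.exp ‖E‖ * (Matrix.trace (exp ((2:ℂ)⁻¹ • C))).re :=
            mul_le_mul_of_nonneg_left hc2 (Real.exp_pos _).le
          exact mul_le_mul_of_nonneg_right h1 hTBpos.le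
  have hlog : Real.log (Matrix.trace (exp A)).re
      ≤ Real.log (Real.exp ‖E‖ * (Matrix.trace (exp ((2:ℂ)⁻¹ • C))).re
          * (Matrix.trace (exp ((2:ℂ)⁻¹ • B))).re) :=
    Real.log_le_log hTApos hfinal
  rw [Real.log_mul (by positivity) hTBpos.ne', Real.log_mul (Real.exp_pos _).ne' hTCpos.ne',
    Real.log_exp] at hlog
  linarith
end MainProof
end

section
/- Let (f_n)_{n∈ℕ} be functions ℝ → ℝ, each Lipschitz with constant ≤ 1, converging pointwise to a function f. Then f is Lipschitz with constant ≤ 1, and the almost-everywhere derivatives converge to the almost-everywhere derivative of f in the weak-* sense: for every finite signed measure ν on ℝ absolutely continuous with respect to Lebesgue measure, lim_{n→∞} ∫ f_n′ dν = ∫ f′ dν, where f_n′ and f′ denote the (Lebesgue-a.e. defined) derivatives of f_n and f. -/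
open MeasureTheory Filter Topology


lemma lip_deriv_bound {φ : ℝ → ℝ} (hφ : LipschitzWith 1 φ) (x : ℝ) : |deriv φ x| ≤ 1 := by
  simpa using norm_deriv_le_of_lipschitz (𝕜 := ℝ) hφ (x₀ := x)

lemma inv_succ_tendsto : Tendsto (fun n : ℕ => ((n:ℝ)+1)⁻¹) atTop (𝓝 0) := by
  have := tendsto_one_div_add_atTop_nhds_zero_nat (𝕜 := ℝ)
  refine this.congr fun n => ?_
  push_cast [one_div]
  ring_nf

lemma hasDerivAt_tendsto_succ {φ : ℝ → ℝ} {x d : ℝ} (hd : HasDerivAt φ d x) :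
    Tendsto (fun n : ℕ => (φ (x + ((n:ℝ)+1)⁻¹) - φ x) * ((n:ℝ)+1)) atTop (𝓝 d) := by
  have h1 : Tendsto (fun n : ℕ => x + ((n:ℝ)+1)⁻¹) atTop (𝓝[≠] x) := by
    rw [tendsto_nhdsWithin_iff]
    constructor
    · simpa using (tendsto_const_nhds.add inv_succ_tendsto)
    · filter_upwards with n
      have : (0:ℝ) < ((n:ℝ)+1)⁻¹ := by positivity
      simp only [Set.mem_compl_iff, Set.mem_singleton_iff]
      intro h; nlinarith [h]
  have h2 := (hasDerivAt_iff_tendsto_slope.1 hd).comp h1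
  refine h2.congr fun n => ?_
  have hn : ((n:ℝ)+1) ≠ 0 := by positivity
  simp only [Function.comp, slope_def_field, add_sub_cancel_left]
  rw [div_eq_mul_inv, inv_inv]

lemma ftc_lip {φ : ℝ → ℝ} (hφ : LipschitzWith 1 φ) {a b : ℝ} (hab : a ≤ b) :
    ∫ x in Set.Ioc a b, deriv φ x = φ b - φ a := by
  have hcont : Continuous φ := hφ.continuous
  set g : ℕ → ℝ → ℝ := fun n x => (φ (x + ((n:ℝ)+1)⁻¹) - φ x) * ((n:ℝ)+1) with hg
  -- dominated convergence
  have hmeas : ∀ n, AEStronglyMeasurable (g n) (volume.restrict (Set.Ioc a b)) := fun n =>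
    (((hcont.comp (continuous_id.add continuous_const)).sub hcont).mul
      continuous_const).aestronglyMeasurable
  have hbound : ∀ n, ∀ᵐ x ∂(volume.restrict (Set.Ioc a b)), ‖g n x‖ ≤ (1:ℝ) := by
    intro n
    filter_upwards with x
    have h1 : |φ (x + ((n:ℝ)+1)⁻¹) - φ x| ≤ ((n:ℝ)+1)⁻¹ := by
      have := hφ.dist_le_mul (x + ((n:ℝ)+1)⁻¹) x
      simp only [Real.dist_eq, NNReal.coe_one, one_mul, add_sub_cancel_left] at this
      simpa [abs_of_pos (show (0:ℝ) < ((n:ℝ)+1)⁻¹ by positivity)] using this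
    have hn : (0:ℝ) < (n:ℝ)+1 := by positivity
    rw [Real.norm_eq_abs, hg, abs_mul, abs_of_pos hn]
    calc |φ (x + ((n:ℝ)+1)⁻¹) - φ x| * ((n:ℝ)+1) ≤ ((n:ℝ)+1)⁻¹ * ((n:ℝ)+1) :=
          mul_le_mul_of_nonneg_right h1 hn.le
      _ = 1 := inv_mul_cancel₀ hn.ne'
  have hlim : ∀ᵐ x ∂(volume.restrict (Set.Ioc a b)),
      Tendsto (fun n => g n x) atTop (𝓝 (deriv φ x)) := by
    refine ae_restrict_of_ae ?_
    filter_upwards [hφ.ae_differentiableAt] with x hx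
    exact hasDerivAt_tendsto_succ hx.hasDerivAt
  have hDC := tendsto_integral_of_dominated_convergence (fun _ => (1:ℝ)) hmeas
    (integrable_const 1) hbound hlim
  -- compute the integrals of g n
  have hInt : ∀ c d : ℝ, IntervalIntegrable φ volume c d := fun c d =>
    hcont.intervalIntegrable c d
  have hval : ∀ n, ∫ x in Set.Ioc a b, g n x =
      ((∫ x in b..(b + ((n:ℝ)+1)⁻¹), φ x) - ∫ x in a..(a + ((n:ℝ)+1)⁻¹), φ x) * ((n:ℝ)+1) := by
    intro n
    set e : ℝ := ((n:ℝ)+1)⁻¹ with he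
    have he0 : (0:ℝ) ≤ e := by positivity
    have h1 : ∫ x in Set.Ioc a b, g n x
        = ((∫ x in Set.Ioc a b, φ (x + e)) - ∫ x in Set.Ioc a b, φ x) * ((n:ℝ)+1) := by
      rw [← integral_sub, ← integral_mul_const]
      · exact ((hcont.comp (continuous_id.add continuous_const)).integrableOn_Ioc)
      · exact hcont.integrableOn_Ioc
    have h2 : ∫ x in Set.Ioc a b, φ (x + e) = ∫ x in (a+e)..(b+e), φ x := by
      rw [← intervalIntegral.integral_of_le hab, intervalIntegral.integral_comp_add_right]
    have h3 : (∫ x in (a+e)..(b+e), φ x) - ∫ x in Set.Ioc a b, φ x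
        = (∫ x in b..(b+e), φ x) - ∫ x in a..(a+e), φ x := by
      rw [← intervalIntegral.integral_of_le hab]
      have A := intervalIntegral.integral_add_adjacent_intervals (hInt a (a+e)) (hInt (a+e) (b+e))
      have B := intervalIntegral.integral_add_adjacent_intervals (hInt a b) (hInt b (b+e))
      linarith [A, B]
    rw [h1, h2, h3]
  -- limit of the right-hand side
  have hF : ∀ c : ℝ, Tendsto (fun n : ℕ => (∫ x in c..(c + ((n:ℝ)+1)⁻¹), φ x) * ((n:ℝ)+1))
      atTop (𝓝 (φ c)) := by
    intro c
    have hd : HasDerivAt (fun u => ∫ x in c..u, φ x) (φ c) c :=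
      intervalIntegral.integral_hasDerivAt_right (hInt c c)
        (hcont.stronglyMeasurableAtFilter _ _) hcont.continuousAt
    have := hasDerivAt_tendsto_succ hd
    simpa using this
  have hval' : Tendsto (fun n => ∫ x in Set.Ioc a b, g n x) atTop (𝓝 (φ b - φ a)) := by
    refine ((hF b).sub (hF a)).congr fun n => ?_
    rw [hval n, sub_mul]
  exact tendsto_nhds_unique hDC hval'



lemma deriv_mul_integrable {φ h : ℝ → ℝ} (hφ : LipschitzWith 1 φ)
    (hh : Integrable h volume) : Integrable (fun x => deriv φ x * h x) volume := by
  refine hh.bdd_mul (measurable_deriv φ).aestronglyMeasurable (c := 1) (Filter.Eventually.of_forall fun x => ?_)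
  simpa using lip_deriv_bound hφ x

lemma deriv_mul_diff_bound {φ g h : ℝ → ℝ} (hφ : LipschitzWith 1 φ)
    (hg : Integrable g volume) (hh : Integrable h volume) :
    |(∫ x, deriv φ x * g x) - ∫ x, deriv φ x * h x| ≤ ∫ x, |g x - h x| := by
  rw [← integral_sub (deriv_mul_integrable hφ hg) (deriv_mul_integrable hφ hh)]
  calc |∫ x, (deriv φ x * g x - deriv φ x * h x)|
      ≤ ∫ x, ‖deriv φ x * g x - deriv φ x * h x‖ := by
        simpa using norm_integral_le_integral_norm (fun x => deriv φ x * g x - deriv φ x * h x)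
    _ ≤ ∫ x, |g x - h x| := by
        refine integral_mono_of_nonneg (Filter.Eventually.of_forall fun x => norm_nonneg _)
          (hg.sub hh).abs (Filter.Eventually.of_forall fun x => ?_)
        have e : deriv φ x * g x - deriv φ x * h x = deriv φ x * (g x - h x) := by ring
        simp only [Real.norm_eq_abs, e, abs_mul]
        calc |deriv φ x| * |g x - h x| ≤ 1 * |g x - h x| :=
              mul_le_mul_of_nonneg_right (lip_deriv_bound hφ x) (abs_nonneg _)
          _ = |g x - h x| := one_mul _

lemma derivOn_integrableOn {φ : ℝ → ℝ} (hφ : LipschitzWith 1 φ) (u v : ℝ) :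
    IntegrableOn (deriv φ) (Set.Ioc u v) volume := by
  refine Integrable.mono' (integrable_const 1) (measurable_deriv φ).aestronglyMeasurable.restrict
    (Filter.Eventually.of_forall fun x => ?_)
  simpa using lip_deriv_bound hφ x

lemma step_term_integrable {φ : ℝ → ℝ} (hφ : LipschitzWith 1 φ) (u v c : ℝ) :
    Integrable (fun x => deriv φ x * (c * (Set.Ioc u v).indicator 1 x)) volume := by
  refine deriv_mul_integrable hφ ?_
  have : Integrable ((Set.Ioc u v).indicator (fun _ => (1:ℝ))) volume := by
    rw [integrable_indicator_iff measurableSet_Ioc]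
    exact integrableOn_const (by simp [measure_Ioc_lt_top])
  simpa [mul_comm, Pi.one_def] using (this.const_mul c)

lemma step_term_integral {φ : ℝ → ℝ} (hφ : LipschitzWith 1 φ) {u v : ℝ} (huv : u ≤ v) (c : ℝ) :
    ∫ x, deriv φ x * (c * (Set.Ioc u v).indicator 1 x) = c * (φ v - φ u) := by
  have hpt : ∀ x, deriv φ x * (c * (Set.Ioc u v).indicator 1 x)
      = c * (Set.Ioc u v).indicator (deriv φ) x := by
    intro x
    by_cases hx : x ∈ Set.Ioc u v <;> simp [Set.indicator_of_mem, Set.indicator_of_notMem, hx,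
      mul_comm]
  simp only [hpt]
  rw [MeasureTheory.integral_const_mul, integral_indicator measurableSet_Ioc, ftc_lip hφ huv]

lemma step_integral {φ : ℝ → ℝ} (hφ : LipschitzWith 1 φ) (k : ℕ) (p : ℕ → ℝ) (a : ℕ → ℝ)
    (hp : ∀ i, p i ≤ p (i + 1)) :
    ∫ x, deriv φ x * (∑ i ∈ Finset.range k, a i * (Set.Ioc (p i) (p (i+1))).indicator 1 x)
      = ∑ i ∈ Finset.range k, a i * (φ (p (i+1)) - φ (p i)) := by
  have : ∀ x, deriv φ x * (∑ i ∈ Finset.range k, a i * (Set.Ioc (p i) (p (i+1))).indicator 1 x)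
      = ∑ i ∈ Finset.range k, deriv φ x * (a i * (Set.Ioc (p i) (p (i+1))).indicator 1 x) := by
    intro x; rw [Finset.mul_sum]
  simp only [this]
  rw [integral_finset_sum _ (fun i _ => step_term_integrable hφ _ _ _)]
  exact Finset.sum_congr rfl fun i _ => step_term_integral hφ (hp i) (a i)

lemma step_sum_integrable (k : ℕ) (p a : ℕ → ℝ) :
    Integrable (fun x => ∑ i ∈ Finset.range k,
      a i * (Set.Ioc (p i) (p (i+1))).indicator 1 x) volume := by
  refine integrable_finset_sum _ (fun i _ => ?_)
  have : Integrable ((Set.Ioc (p i) (p (i+1))).indicator (fun _ => (1:ℝ))) volume := by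
    rw [integrable_indicator_iff measurableSet_Ioc]
    exact integrableOn_const (by simp [measure_Ioc_lt_top])
  simpa [mul_comm, Pi.one_def] using this.const_mul (a i)

lemma step_approx {c : ℝ → ℝ} (hc : Continuous c) (hsupp : HasCompactSupport c)
    {ε : ℝ} (hε : 0 < ε) :
    ∃ (k : ℕ) (p a : ℕ → ℝ), (∀ i, p i ≤ p (i+1)) ∧
      (∫ x, |c x - ∑ i ∈ Finset.range k, a i * (Set.Ioc (p i) (p (i+1))).indicator 1 x|) ≤ ε := by
  obtain ⟨r, hr⟩ := hsupp.isCompact.isBounded.subset_closedBall 0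
  set R : ℝ := |r| + 1 with hR
  set A : ℝ := -R with hA
  set B : ℝ := R with hB
  have hAB : 0 < B - A := by
    have : 0 < R := by positivity
    simp [hA, hB]; linarith
  have czero : ∀ x, x ∉ Set.Ioc A B → c x = 0 := by
    intro x hx
    apply image_eq_zero_of_notMem_tsupport
    intro hmem
    have := hr hmem
    rw [Metric.mem_closedBall, Real.dist_eq, sub_zero] at this
    have h1 : |x| ≤ |r| := this.trans (le_abs_self r)
    have hRr : R = |r| + 1 := rfl
    rw [Set.mem_Ioc, not_and_or] at hx
    rcases hx with hx | hx
    · push_neg at hx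
      have h2 : -x ≤ |x| := neg_le_abs x
      have h3 : x ≤ A := hx
      have h4 : A = -R := rfl
      linarith
    · push_neg at hx
      have h2 : x ≤ |x| := le_abs_self x
      have h4 : B = R := rfl
      linarith
  have hu : UniformContinuous c :=
    hc.uniformContinuous_of_tendsto_cocompact hsupp.is_zero_at_infty
  have hε' : 0 < ε / (B - A) := div_pos hε hAB
  obtain ⟨δ, hδ0, hδ⟩ := Metric.uniformContinuous_iff.1 hu _ hε'
  obtain ⟨k, hk⟩ := exists_nat_gt ((B - A) / δ)
  have hk0 : 0 < (k:ℝ) := (div_pos hAB hδ0).trans hk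
  set dδ : ℝ := (B - A) / k with hdδ
  have hd0 : 0 < dδ := div_pos hAB hk0
  have hdlt : dδ < δ := by
    rw [hdδ, div_lt_iff₀ hk0]
    rw [div_lt_iff₀ hδ0] at hk
    linarith [hk]
  set p : ℕ → ℝ := fun i => A + i * dδ with hpdef
  set a : ℕ → ℝ := fun i => c (p i) with hadef
  have hstep : ∀ i : ℕ, p (i+1) = p i + dδ := by
    intro i; simp only [hpdef]; push_cast; ring
  have hp : ∀ i, p i ≤ p (i+1) := fun i => by rw [hstep i]; linarith
  have pmono : Monotone p := monotone_nat_of_le_succ hp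
  have p0 : p 0 = A := by simp [hpdef]
  have pk : p k = B := by
    simp only [hpdef, hdδ]
    field_simp
    ring
  have hsub : ∀ i : ℕ, i < k → Set.Ioc (p i) (p (i+1)) ⊆ Set.Ioc A B := by
    intro i hi
    refine Set.Ioc_subset_Ioc ?_ ?_
    · rw [← p0]; exact pmono (Nat.zero_le i)
    · rw [← pk]; exact pmono hi
  have hpt : ∀ x, |c x - ∑ i ∈ Finset.range k, a i * (Set.Ioc (p i) (p (i+1))).indicator 1 x|
      ≤ (Set.Ioc A B).indicator (fun _ => ε / (B - A)) x := by
    intro x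
    by_cases hx : x ∈ Set.Ioc A B
    · -- locate the subinterval containing x
      set t : ℝ := (x - A) / dδ with htdef
      have ht0 : 0 < t := div_pos (by linarith [hx.1]) hd0
      have htk : t ≤ (k:ℝ) := by
        rw [htdef, div_le_iff₀ hd0]
        have : (k:ℝ) * dδ = B - A := by rw [hdδ]; field_simp
        rw [this]; linarith [hx.2]
      set m := ⌈t⌉₊ with hmdef
      have hm1 : 1 ≤ m := Nat.one_le_ceil_iff.2 ht0
      have hmk : m ≤ k := Nat.ceil_le.2 htk
      set i0 := m - 1 with hi0def
      have hsucc : i0 + 1 = m := Nat.succ_pred_eq_of_pos hm1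
      have hi0k : i0 < k := lt_of_lt_of_le (Nat.sub_lt hm1 one_pos) hmk
      have hxupper : x ≤ p (i0 + 1) := by
        rw [hsucc]
        have h1 : t ≤ (m:ℝ) := Nat.le_ceil t
        have h2 : x - A = t * dδ := by rw [htdef]; field_simp
        have : x - A ≤ (m:ℝ) * dδ := by
          rw [h2]; exact mul_le_mul_of_nonneg_right h1 hd0.le
        simp only [hpdef]; linarith
      have hxlower : p i0 < x := by
        have hcast : ((i0:ℕ):ℝ) = (m:ℝ) - 1 := by
          rw [hi0def, Nat.cast_sub hm1]; simp
        have hlt : (m:ℝ) - 1 < t := by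
          by_contra hcon
          push_neg at hcon
          have : m ≤ i0 := Nat.ceil_le.2 (by rw [hcast]; exact hcon)
          omega
        have : ((i0:ℕ):ℝ) * dδ < x - A := by
          rw [hcast]
          calc ((m:ℝ) - 1) * dδ < t * dδ := mul_lt_mul_of_pos_right hlt hd0
            _ = x - A := by rw [htdef]; field_simp
        simp only [hpdef]; linarith
      have hxmem : x ∈ Set.Ioc (p i0) (p (i0 + 1)) := ⟨hxlower, hxupper⟩
      have hsx : (∑ i ∈ Finset.range k, a i * (Set.Ioc (p i) (p (i+1))).indicator 1 x)
          = c (p i0) := by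
        rw [Finset.sum_eq_single_of_mem i0 (Finset.mem_range.2 hi0k)]
        · simp [Set.indicator_of_mem hxmem, hadef]
        · intro j _ hne
          have hnm : x ∉ Set.Ioc (p j) (p (j+1)) := by
            intro hmem'
            rcases lt_or_gt_of_ne hne with hlt | hgt
            · have : p (j+1) ≤ p i0 := pmono (Nat.succ_le_of_lt hlt)
              exact absurd hmem'.2 (not_le.2 (lt_of_le_of_lt this hxmem.1))
            · have : p (i0+1) ≤ p j := pmono (Nat.succ_le_of_lt hgt)
              exact absurd hmem'.1 (not_lt.2 (le_trans hxmem.2 this))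
          simp [Set.indicator_of_notMem hnm]
      rw [hsx, Set.indicator_of_mem hx]
      have hdist : dist x (p i0) < δ := by
        rw [Real.dist_eq, abs_of_pos (by linarith [hxmem.1])]
        have := hxmem.2
        rw [hstep i0] at this
        linarith
      exact le_of_lt (by simpa [Real.dist_eq] using hδ hdist)
    · have hc0 : c x = 0 := czero x hx
      have hs0 : (∑ i ∈ Finset.range k, a i * (Set.Ioc (p i) (p (i+1))).indicator 1 x) = 0 := by
        refine Finset.sum_eq_zero fun i hi => ?_
        have : x ∉ Set.Ioc (p i) (p (i+1)) := fun hmem =>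
          hx (hsub i (Finset.mem_range.1 hi) hmem)
        simp [Set.indicator_of_notMem this]
      rw [hc0, hs0, Set.indicator_of_notMem hx]
      simp
  refine ⟨k, p, a, hp, ?_⟩
  have hind_int : Integrable ((Set.Ioc A B).indicator (fun _ => ε / (B - A))) volume := by
    rw [integrable_indicator_iff measurableSet_Ioc]
    exact integrableOn_const (by simp [measure_Ioc_lt_top])
  calc (∫ x, |c x - ∑ i ∈ Finset.range k, a i * (Set.Ioc (p i) (p (i+1))).indicator 1 x|)
      ≤ ∫ x, (Set.Ioc A B).indicator (fun _ => ε / (B - A)) x :=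
        integral_mono_of_nonneg (Filter.Eventually.of_forall fun x => abs_nonneg _)
          hind_int (Filter.Eventually.of_forall hpt)
    _ = (volume (Set.Ioc A B)).toReal • (ε / (B - A)) := integral_indicator_const _ measurableSet_Ioc
    _ = ε := by
        rw [Real.volume_Ioc, ENNReal.toReal_ofReal hAB.le, smul_eq_mul]
        field_simp

/-- If `f_n : ℝ → ℝ` are `1`-Lipschitz and converge pointwise to `f`, then `f` is
`1`-Lipschitz and the (Lebesgue-a.e. defined) derivatives `f_n′` converge to `f′` weak-*
against every finite signed measure absolutely continuous with respect to Lebesgue measure;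
equivalently (writing the measure as `h·λ` with `h ∈ L¹(λ)`),
`∫ f_n′ h dλ → ∫ f′ h dλ` for every integrable `h`. -/
theorem lipschitz_pointwise_limit_deriv_weak_star
    (f : ℕ → ℝ → ℝ) (flim : ℝ → ℝ)
    (hlip : ∀ n, LipschitzWith 1 (f n))
    (hconv : ∀ x : ℝ, Tendsto (fun n => f n x) atTop (𝓝 (flim x))) :
    LipschitzWith 1 flim ∧
      ∀ h : ℝ → ℝ, Integrable h volume →
        Tendsto (fun n => ∫ x, deriv (f n) x * h x) atTop
          (𝓝 (∫ x, deriv flim x * h x)) := by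
  have hflim : LipschitzWith 1 flim := by
    refine LipschitzWith.of_dist_le_mul fun x y => ?_
    refine le_of_tendsto ((hconv x).dist (hconv y))
      (Filter.Eventually.of_forall fun n => ?_)
    exact (hlip n).dist_le_mul x y
  refine ⟨hflim, fun h hInt => ?_⟩
  rw [Metric.tendsto_atTop]
  intro ε hε
  have hε8 : 0 < ε / 8 := by linarith
  obtain ⟨c, hcsupp, hcapprox, hccont, hcint⟩ :=
    hInt.exists_hasCompactSupport_integral_sub_le hε8
  obtain ⟨k, p, a, hp, happrox⟩ := step_approx hccont hcsupp hε8
  set s : ℝ → ℝ := fun x => ∑ i ∈ Finset.range k,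
    a i * (Set.Ioc (p i) (p (i+1))).indicator 1 x with hsdef
  have hsint : Integrable s volume := step_sum_integrable k p a
  -- the step function is "good"
  have hgood : Tendsto (fun n => ∫ x, deriv (f n) x * s x) atTop
      (𝓝 (∫ x, deriv flim x * s x)) := by
    have hrw : ∀ n, (∫ x, deriv (f n) x * s x)
        = ∑ i ∈ Finset.range k, a i * (f n (p (i+1)) - f n (p i)) := fun n =>
      step_integral (hlip n) k p a hp
    have hrw' : (∫ x, deriv flim x * s x)
        = ∑ i ∈ Finset.range k, a i * (flim (p (i+1)) - flim (p i)) :=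
      step_integral hflim k p a hp
    simp only [hrw, hrw']
    exact tendsto_finset_sum _ fun i _ =>
      (((hconv (p (i+1))).sub (hconv (p i))).const_mul (a i))
  rw [Metric.tendsto_atTop] at hgood
  obtain ⟨N, hN⟩ := hgood (ε / 2) (by linarith)
  refine ⟨N, fun n hn => ?_⟩
  -- L¹ distance from h to s
  have hhs : (∫ x, |h x - s x|) ≤ ε / 4 := by
    have htri : ∀ x, |h x - s x| ≤ |h x - c x| + |c x - s x| := fun x => by
      calc |h x - s x| = |(h x - c x) + (c x - s x)| := by ring_nf
        _ ≤ |h x - c x| + |c x - s x| := abs_add_le _ _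
    have hint1 : Integrable (fun x => |h x - c x| + |c x - s x|) volume :=
      ((hInt.sub hcint).abs).add ((hcint.sub hsint).abs)
    calc (∫ x, |h x - s x|) ≤ ∫ x, (|h x - c x| + |c x - s x|) :=
          integral_mono_of_nonneg (Filter.Eventually.of_forall fun x => abs_nonneg _)
            hint1 (Filter.Eventually.of_forall htri)
      _ = (∫ x, |h x - c x|) + ∫ x, |c x - s x| :=
          integral_add ((hInt.sub hcint).abs) ((hcint.sub hsint).abs)
      _ ≤ ε / 8 + ε / 8 := by
          refine add_le_add ?_ happrox
          simpa [Real.norm_eq_abs] using hcapprox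
      _ = ε / 4 := by ring
  have hb1 : |(∫ x, deriv (f n) x * h x) - ∫ x, deriv (f n) x * s x| ≤ ε / 4 :=
    le_trans (deriv_mul_diff_bound (hlip n) hInt hsint) hhs
  have hb3 : |(∫ x, deriv flim x * s x) - ∫ x, deriv flim x * h x| ≤ ε / 4 := by
    refine le_trans (deriv_mul_diff_bound hflim hsint hInt) ?_
    calc (∫ x, |s x - h x|) = ∫ x, |h x - s x| := by simp only [abs_sub_comm]
      _ ≤ ε / 4 := hhs
  have hb2 := hN n hn
  rw [Real.dist_eq] at hb2 ⊢
  calc |(∫ x, deriv (f n) x * h x) - ∫ x, deriv flim x * h x|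
      ≤ |(∫ x, deriv (f n) x * h x) - ∫ x, deriv (f n) x * s x|
        + |(∫ x, deriv (f n) x * s x) - ∫ x, deriv flim x * s x|
        + |(∫ x, deriv flim x * s x) - ∫ x, deriv flim x * h x| := by
          have := abs_sub_le (∫ x, deriv (f n) x * h x) (∫ x, deriv (f n) x * s x)
            (∫ x, deriv flim x * h x)
          have h2 := abs_sub_le (∫ x, deriv (f n) x * s x) (∫ x, deriv flim x * s x)
            (∫ x, deriv flim x * h x)
          linarith
    _ < ε := by linarith
end

section
/- Let ν be a Borel probability measure on ℝ and let 0 < β < ∞. Define θ_ν(M, β) := inf { (∫ g(x)² ν(dx))^{1/2} : g ∈ C¹(ℝ), Lip(g) ≤ 1, Lip(g′) ≤ β, ∫ g′(x) ν(dx) = M } (with the convention inf ∅ = +∞). Then θ_ν(M, β) > 0 for every M > 0 if and only if ν has no isolated point masses, i.e., there do not exist x ∈ ℝ and δ > 0 with ν({y : |y − x| ≤ δ}) = ν({x}) > 0. -/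
open MeasureTheory Metric Set Function Filter
open scoped ENNReal NNReal Topology

lemma bump_construction (ν : Measure ℝ) [IsProbabilityMeasure ν] (β : ℝ≥0) (hβ : 0 < β)
    (x δ : ℝ) (hδ : 0 < δ) (heq : ν {y : ℝ | |y - x| ≤ δ} = ν {x}) (hm : 0 < ν {x}) :
    ∃ M : ℝ, 0 < M ∧ ∃ g : ℝ → ℝ, ContDiff ℝ 1 g ∧ LipschitzWith 1 g ∧
      LipschitzWith β (deriv g) ∧ (∫ y, deriv g y ∂ν) = M ∧
      (∫⁻ y, ENNReal.ofReal ((g y) ^ 2) ∂ν) = 0 := by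
  classical
  set φ : ContDiffBump x := ⟨δ/2, δ, by positivity, by linarith⟩ with hφ
  set g₀ : ℝ → ℝ := fun y => (y - x) * φ y with hg₀
  have hsm : ContDiff ℝ (⊤ : ℕ∞) g₀ := (contDiff_id.sub contDiff_const).mul φ.contDiff
  have hsupp : support g₀ ⊆ ball x δ := by
    intro y hy
    have : φ y ≠ 0 := by
      intro h; apply hy; simp [hg₀, h]
    have := φ.support_eq ▸ mem_support.mpr this
    simpa [hφ] using this
  have hcs : HasCompactSupport g₀ :=
    HasCompactSupport.of_support_subset_isCompact (isCompact_closedBall x δ)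
      (hsupp.trans ball_subset_closedBall)
  have hsm1 : ContDiff ℝ (⊤ : ℕ∞) (deriv g₀) := (contDiff_infty_iff_deriv.mp (by exact_mod_cast hsm)).2
  have hcs1 : HasCompactSupport (deriv g₀) := hcs.deriv
  have hsm2 : ContDiff ℝ (⊤ : ℕ∞) (deriv (deriv g₀)) :=
    (contDiff_infty_iff_deriv.mp (by exact_mod_cast hsm1)).2
  obtain ⟨K₁, hK₁⟩ := hcs1.exists_bound_of_continuous hsm1.continuous
  obtain ⟨K₂, hK₂⟩ := (hcs1.deriv).exists_bound_of_continuous hsm2.continuous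
  have hK₁0 : 0 ≤ K₁ := le_trans (norm_nonneg _) (hK₁ 0)
  have hK₂0 : 0 ≤ K₂ := le_trans (norm_nonneg _) (hK₂ 0)
  set c : ℝ := min (1/(K₁+1)) ((β:ℝ)/(K₂+1)) with hc
  have hc0 : 0 < c := by
    apply lt_min <;> positivity
  set g : ℝ → ℝ := fun y => c * g₀ y with hg
  have hgsm : ContDiff ℝ (⊤ : ℕ∞) g := contDiff_const.mul hsm
  have hdg : deriv g = fun y => c * deriv g₀ y := by
    funext y
    exact deriv_const_mul c (hsm.differentiable (by simp)).differentiableAt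
  have hddg : deriv (deriv g) = fun y => c * deriv (deriv g₀) y := by
    rw [hdg]; funext y
    exact deriv_const_mul c (hsm1.differentiable (by simp)).differentiableAt
  have hb1 : ∀ y, ‖deriv g y‖ ≤ 1 := by
    intro y
    rw [hdg]
    calc ‖c * deriv g₀ y‖ = c * ‖deriv g₀ y‖ := by
          rw [norm_mul, Real.norm_of_nonneg hc0.le]
    _ ≤ (1/(K₁+1)) * K₁ := by
          apply mul_le_mul (min_le_left _ _) (hK₁ y) (norm_nonneg _) (by positivity)
    _ ≤ 1 := by
          rw [div_mul_eq_mul_div, one_mul, div_le_one (by positivity)]; linarith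
  have hb2 : ∀ y, ‖deriv (deriv g) y‖ ≤ (β:ℝ) := by
    intro y
    rw [hddg]
    calc ‖c * deriv (deriv g₀) y‖ = c * ‖deriv (deriv g₀) y‖ := by
          rw [norm_mul, Real.norm_of_nonneg hc0.le]
    _ ≤ ((β:ℝ)/(K₂+1)) * K₂ := by
          apply mul_le_mul (min_le_right _ _) (hK₂ y) (norm_nonneg _) (by positivity)
    _ ≤ (β:ℝ) := by
          rw [div_mul_eq_mul_div, div_le_iff₀ (by positivity)]
          nlinarith [hβ.le, NNReal.coe_nonneg β]
  have hlip1 : LipschitzWith 1 g :=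
    lipschitzWith_of_nnnorm_deriv_le (hgsm.differentiable (by simp))
      (fun y => by simpa [← NNReal.coe_le_coe] using hb1 y)
  have hlipβ : LipschitzWith β (deriv g) := by
    apply lipschitzWith_of_nnnorm_deriv_le
    · rw [hdg]
      exact (contDiff_const.mul hsm1).differentiable (by simp)
    · intro y
      have := hb2 y
      simpa [← NNReal.coe_le_coe] using this
  -- the null set
  have hE : closedBall x δ = {y : ℝ | |y - x| ≤ δ} := by
    ext y; simp [Real.dist_eq, mem_closedBall]
  have hnull : ν (closedBall x δ \ {x}) = 0 := by
    rw [measure_diff (by simp [hE, abs_nonneg, hδ.le]) (measurableSet_singleton x).nullMeasurableSet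
      (measure_ne_top ν _), hE, heq, tsub_self]
  have hae : ∀ᵐ y ∂ν, y ∉ closedBall x δ \ {x} := measure_eq_zero_iff_ae_notMem.mp hnull
  -- outside the closed ball everything vanishes
  have hout : ∀ y, y ∉ closedBall x δ → g₀ y = 0 ∧ deriv g₀ y = 0 := by
    intro y hy
    constructor
    · by_contra h
      exact hy (ball_subset_closedBall (hsupp (mem_support.mpr h)))
    · by_contra h
      have : y ∈ tsupport g₀ := support_deriv_subset (mem_support.mpr h)
      have : y ∈ closure (ball x δ) := closure_mono hsupp this
      rw [closure_ball x hδ.ne'] at this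
      exact hy this
  have hder_x : deriv g₀ x = 1 := by
    have h1 : HasDerivAt (fun y : ℝ => y - x) 1 x := (hasDerivAt_id x).sub_const x
    have h2 : HasDerivAt (fun y => (φ y : ℝ)) (deriv φ x) x :=
      (φ.contDiff (n := 1).differentiable one_ne_zero).differentiableAt.hasDerivAt
    have h := h1.mul h2
    rw [hg₀]; erw [h.deriv]
    have : φ x = 1 := φ.one_of_mem_closedBall (by simp [φ.rIn_pos.le])
    simp [this]
  -- the integral of deriv g
  have hind : deriv g =ᵐ[ν] Set.indicator {x} (fun _ => c) := by
    filter_upwards [hae] with y hy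
    rw [hdg]
    by_cases hyx : y = x
    · subst hyx
      simp [hder_x, Set.indicator_of_mem, c]
    · have hyE : y ∉ closedBall x δ := fun h => hy ⟨h, hyx⟩
      show c * deriv g₀ y = _
      rw [(hout y hyE).2, Set.indicator_of_notMem (by simpa using hyx)]
      ring
  have hint : (∫ y, deriv g y ∂ν) = c * (ν {x}).toReal := by
    rw [integral_congr_ae hind, integral_indicator_const _ (measurableSet_singleton x)]
    simp [mul_comm, measureReal_def]
  have hM : 0 < c * (ν {x}).toReal := by
    apply mul_pos hc0
    exact ENNReal.toReal_pos hm.ne' (measure_ne_top ν _)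
  refine ⟨c * (ν {x}).toReal, hM, g, hgsm.of_le (by exact_mod_cast le_top), hlip1, hlipβ, hint, ?_⟩
  have : (fun y => ENNReal.ofReal ((g y) ^ 2)) =ᵐ[ν] 0 := by
    filter_upwards [hae] with y hy
    by_cases hyx : y = x
    · subst hyx; simp [hg, hg₀]
    · have hyE : y ∉ closedBall x δ := fun h => hy ⟨h, hyx⟩
      simp [hg, (hout y hyE).1]
  rw [lintegral_congr_ae this]
  simp

lemma aw_keyfacts (ν : Measure ℝ) [IsProbabilityMeasure ν] (β : ℝ≥0) (hβ : 0 < β)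
    (M t : ℝ) (hM : 0 < M) (ht : 0 < t) (g : ℝ → ℝ)
    (hc : ContDiff ℝ 1 g) (hl1 : LipschitzWith 1 g) (hlβ : LipschitzWith β (deriv g))
    (hintM : (∫ y, deriv g y ∂ν) = M)
    (hL : (∫⁻ y, ENNReal.ofReal ((g y) ^ 2) ∂ν) < ENNReal.ofReal (t^2 * t)) :
    MeasurableSet {y : ℝ | M/2 ≤ deriv g y ∧ |g y| ≤ t} ∧
    ENNReal.ofReal (M/2) - ENNReal.ofReal t ≤ ν {y : ℝ | M/2 ≤ deriv g y ∧ |g y| ≤ t} ∧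
    ∀ x ∈ {y : ℝ | M/2 ≤ deriv g y ∧ |g y| ≤ t},
      ν {y : ℝ | 8*t/M ≤ |y - x| ∧ |y - x| ≤ M/(4*β)} ≤ ENNReal.ofReal t := by
  have hβ' : (0:ℝ) < (β:ℝ) := hβ
  have hdc : Continuous (deriv g) := hc.continuous_deriv le_rfl
  have hbd : ∀ y, |deriv g y| ≤ 1 := by
    intro y
    have := norm_deriv_le_of_lipschitz (𝕜 := ℝ) (x₀ := y) hl1
    simpa using this
  have hintg' : Integrable (deriv g) ν := by
    refine Integrable.mono' (integrable_const (1:ℝ)) hdc.aestronglyMeasurable ?_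
    exact ae_of_all _ fun y => by simpa using hbd y
  set A : Set ℝ := {y | M/2 ≤ deriv g y} with hA
  have hAm : MeasurableSet A := (isClosed_le continuous_const hdc).measurableSet
  set B : Set ℝ := {y | |g y| ≤ t} with hB
  have hBm : MeasurableSet B :=
    (isClosed_le (continuous_abs.comp hc.continuous) continuous_const).measurableSet
  have hCeq : {y : ℝ | M/2 ≤ deriv g y ∧ |g y| ≤ t} = A ∩ B := rfl
  have hCm : MeasurableSet (A ∩ B) := hAm.inter hBm
  -- lower bound on ν A
  have hAlow : ENNReal.ofReal (M/2) ≤ ν A := by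
    have e1 : ∫ y, (deriv g y - M/2) ∂ν = M/2 := by
      rw [integral_sub hintg' (integrable_const _), hintM, integral_const, probReal_univ]
      simp only [ENNReal.toReal_one, one_smul]
      ring
    have e2 : ∀ y, deriv g y - M/2 ≤ Set.indicator A (fun _ => (1:ℝ)) y := by
      intro y
      by_cases hy : y ∈ A
      · rw [Set.indicator_of_mem hy]
        have := abs_le.mp (hbd y)
        linarith
      · rw [Set.indicator_of_notMem hy]
        have : deriv g y < M/2 := lt_of_not_ge hy
        linarith
    have e3 : Integrable (Set.indicator A fun _ => (1:ℝ)) ν := (integrable_const 1).indicator hAm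
    have e4 := integral_mono (f := fun y => deriv g y - M/2) (g := Set.indicator A fun _ => (1:ℝ))
      (by exact hintg'.sub (integrable_const (M/2))) e3 e2
    rw [e1, integral_indicator_const _ hAm] at e4
    simp only [smul_eq_mul, mul_one] at e4
    exact ENNReal.ofReal_le_of_le_toReal e4
  -- Chebyshev
  set S : Set ℝ := {y | t ≤ |g y|} with hS
  have hfme : AEMeasurable (fun y => ENNReal.ofReal ((g y)^2)) ν :=
    ((hc.continuous.pow 2).measurable.ennreal_ofReal).aemeasurable
  have hSsub : S ⊆ {y | ENNReal.ofReal (t^2) ≤ ENNReal.ofReal ((g y)^2)} := by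
    intro y hy
    have h1 : t^2 ≤ |g y|^2 := pow_le_pow_left₀ ht.le hy 2
    rw [sq_abs] at h1
    exact ENNReal.ofReal_le_ofReal h1
  have hcheb : ν S ≤ ENNReal.ofReal t := by
    have h1 : ENNReal.ofReal (t^2) * ν S ≤ ∫⁻ y, ENNReal.ofReal ((g y)^2) ∂ν := by
      calc ENNReal.ofReal (t^2) * ν S
          ≤ ENNReal.ofReal (t^2) * ν {y | ENNReal.ofReal (t^2) ≤ ENNReal.ofReal ((g y)^2)} := by
            exact mul_le_mul_right (measure_mono hSsub) _
        _ ≤ _ := mul_meas_ge_le_lintegral₀ hfme _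
    have heq2 : ENNReal.ofReal (t^2 * t) = ENNReal.ofReal (t^2) * ENNReal.ofReal t :=
      ENNReal.ofReal_mul (by positivity)
    have h2 : ENNReal.ofReal (t^2) * ν S < ENNReal.ofReal (t^2) * ENNReal.ofReal t :=
      lt_of_le_of_lt h1 (heq2 ▸ hL)
    exact ((ENNReal.mul_lt_mul_iff_right (ENNReal.ofReal_pos.mpr (by positivity)).ne'
      ENNReal.ofReal_ne_top).mp h2).le
  refine ⟨hCeq ▸ hCm, ?_, ?_⟩
  · rw [hCeq]
    have hsub : A \ B ⊆ S := by
      intro y hy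
      have h2 : ¬ (|g y| ≤ t) := hy.2
      exact le_of_lt (lt_of_not_ge h2)
    have hfinal : ν A ≤ ν (A ∩ B) + ENNReal.ofReal t := by
      calc ν A ≤ ν (A ∩ B) + ν (A \ B) := measure_le_inter_add_diff ν A B
        _ ≤ ν (A ∩ B) + ENNReal.ofReal t :=
            add_le_add_right (le_trans (measure_mono hsub) hcheb) _
    exact tsub_le_iff_right.mpr (le_trans hAlow hfinal)
  · rintro x ⟨hx1, hx2⟩
    set r : ℝ := M/(4*(β:ℝ)) with hr
    have hr0 : 0 < r := by positivity
    have hderlow : ∀ z ∈ Icc (x - r) (x + r), M/4 ≤ deriv g z := by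
      intro z hz
      have hdist := hlβ.dist_le_mul z x
      rw [Real.dist_eq, Real.dist_eq] at hdist
      have hzr : |z - x| ≤ r := abs_le.mpr ⟨by linarith [hz.1], by linarith [hz.2]⟩
      have hβr : (β:ℝ) * r = M/4 := by
        rw [hr]; field_simp
      have h1 : |deriv g z - deriv g x| ≤ M/4 := by
        refine le_trans (hdist.trans (mul_le_mul_of_nonneg_left hzr β.coe_nonneg)) (le_of_eq hβr)
      have := abs_le.mp h1
      linarith
    have hmono := (convex_Icc (x-r) (x+r)).mul_sub_le_image_sub_of_le_deriv
      (hc.continuous.continuousOn) ((hc.differentiable one_ne_zero).differentiableOn)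
      (fun z hz => hderlow z (interior_subset hz))
    have hxI : x ∈ Icc (x - r) (x + r) := by constructor <;> linarith
    have hsub2 : {y : ℝ | 8*t/M ≤ |y - x| ∧ |y - x| ≤ r} ⊆ S := by
      rintro y ⟨hy1, hy2⟩
      have hyI : y ∈ Icc (x - r) (x + r) := by
        have := abs_le.mp hy2
        constructor <;> linarith [this.1, this.2]
      have hgx := abs_le.mp hx2
      have harith : M/4 * (8*t/M) = 2*t := by field_simp; ring
      rcases le_total x y with hxy | hxy
      · have h := hmono x hxI y hyI hxy
        have habs : |y - x| = y - x := abs_of_nonneg (by linarith)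
        rw [habs] at hy1
        have h2 : 2*t ≤ g y - g x := by
          calc 2*t = M/4 * (8*t/M) := harith.symm
            _ ≤ M/4 * (y - x) := by
                apply mul_le_mul_of_nonneg_left hy1 (by positivity)
            _ ≤ g y - g x := h
        have : t ≤ g y := by linarith [hgx.1]
        exact le_trans this (le_abs_self _)
      · have h := hmono y hyI x hxI hxy
        have habs : |y - x| = x - y := by rw [abs_sub_comm]; exact abs_of_nonneg (by linarith)
        rw [habs] at hy1
        have h2 : 2*t ≤ g x - g y := by
          calc 2*t = M/4 * (8*t/M) := harith.symm
            _ ≤ M/4 * (x - y) := by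
                apply mul_le_mul_of_nonneg_left hy1 (by positivity)
            _ ≤ g x - g y := h
        have : t ≤ -(g y) := by linarith [hgx.2]
        exact le_trans this (neg_le_abs _)
    exact le_trans (measure_mono hsub2) hcheb

lemma aw_aggregate (ν : Measure ℝ) [IsProbabilityMeasure ν] (β : ℝ≥0) (hβ : 0 < β)
    (M : ℝ) (hM : 0 < M) (G : ℕ → ℝ → ℝ)
    (hGc : ∀ n, ContDiff ℝ 1 (G n)) (hGl1 : ∀ n, LipschitzWith 1 (G n))
    (hGlβ : ∀ n, LipschitzWith β (deriv (G n)))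
    (hGint : ∀ n, (∫ y, deriv (G n) y ∂ν) = M)
    (hGL : ∀ n, (∫⁻ y, ENNReal.ofReal ((G n y) ^ 2) ∂ν) <
      ENNReal.ofReal ((M/(4*((n:ℝ)+1)))^2 * (M/(4*((n:ℝ)+1))))) :
    ∃ (x : ℝ) (δ : ℝ), 0 < δ ∧ ν {y : ℝ | |y - x| ≤ δ} = ν {x} ∧ 0 < ν {x} := by
  classical
  have hβ' : (0:ℝ) < (β:ℝ) := hβ
  set t : ℕ → ℝ := fun n => M/(4*((n:ℝ)+1)) with htdef
  have ht : ∀ n, 0 < t n := fun n => by positivity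
  have htanti : ∀ {m k : ℕ}, m ≤ k → t k ≤ t m := by
    intro m k hmk
    have h1 : (m:ℝ) + 1 ≤ (k:ℝ) + 1 := by exact_mod_cast Nat.succ_le_succ hmk
    apply div_le_div_of_nonneg_left hM.le (by positivity) (by linarith)
  set C : ℕ → Set ℝ := fun n => {y | M/2 ≤ deriv (G n) y ∧ |G n y| ≤ t n} with hCdef
  have key : ∀ n, MeasurableSet (C n) ∧
      ENNReal.ofReal (M/2) - ENNReal.ofReal (t n) ≤ ν (C n) ∧
      ∀ x ∈ C n, ν {y : ℝ | 8*(t n)/M ≤ |y - x| ∧ |y - x| ≤ M/(4*β)} ≤ ENNReal.ofReal (t n) :=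
    fun n => aw_keyfacts ν β hβ M (t n) hM (ht n) (G n) (hGc n) (hGl1 n) (hGlβ n)
      (hGint n) (hGL n)
  have hClow : ∀ n, ENNReal.ofReal (M/4) ≤ ν (C n) := by
    intro n
    refine le_trans ?_ (key n).2.1
    have h1 : t n ≤ M/4 := by
      have hn0 : (0:ℝ) ≤ (n:ℝ) := Nat.cast_nonneg n
      have : (1:ℝ) ≤ (n:ℝ) + 1 := by linarith
      calc t n ≤ M/(4*1) := div_le_div_of_nonneg_left hM.le (by norm_num) (by linarith)
        _ = M/4 := by norm_num
    calc ENNReal.ofReal (M/4) = ENNReal.ofReal (M/2) - ENNReal.ofReal (M/4) := by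
          rw [← ENNReal.ofReal_sub _ (by positivity)]
          congr 1
          ring
      _ ≤ ENNReal.ofReal (M/2) - ENNReal.ofReal (t n) := by
          exact tsub_le_tsub_left (ENNReal.ofReal_le_ofReal h1) _
  -- the decreasing tails
  set U : ℕ → Set ℝ := fun n => ⋃ k, C (n + k) with hUdef
  have hUm : ∀ n, MeasurableSet (U n) := fun n => MeasurableSet.iUnion fun k => (key _).1
  have hUanti : Antitone U := by
    intro m n hmn x hx
    obtain ⟨k, hk⟩ := Set.mem_iUnion.mp hx
    exact Set.mem_iUnion.mpr ⟨n - m + k, by rwa [show m + (n - m + k) = n + k by omega]⟩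
  have hUlow : ∀ n, ENNReal.ofReal (M/4) ≤ ν (U n) := by
    intro n
    refine le_trans (hClow n) (measure_mono ?_)
    have : C n = C (n + 0) := by rw [Nat.add_zero]
    rw [this]
    exact Set.subset_iUnion (fun k => C (n + k)) 0
  have htend : Tendsto (ν ∘ U) atTop (𝓝 (ν (⋂ n, U n))) :=
    tendsto_measure_iInter_atTop (fun n => (hUm n).nullMeasurableSet) hUanti
      ⟨0, measure_ne_top ν _⟩
  have hD : ENNReal.ofReal (M/4) ≤ ν (⋂ n, U n) := ge_of_tendsto' htend hUlow
  have hDpos : ν (⋂ n, U n) ≠ 0 := by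
    intro h0
    rw [h0] at hD
    exact absurd (le_antisymm hD zero_le).symm (by simp [ENNReal.ofReal_eq_zero]; positivity)
  -- the null set of points with a null neighborhood
  set N : Set ℝ := ⋃ p : ℚ × ℚ, ⋃ (_ : ν (Set.Ioo (p.1:ℝ) (p.2:ℝ)) = 0),
    Set.Ioo (p.1:ℝ) (p.2:ℝ) with hNdef
  have hN : ν N = 0 := measure_iUnion_null fun p => measure_iUnion_null fun hp => hp
  obtain ⟨x, hxD, hxN⟩ : ∃ x, x ∈ (⋂ n, U n) ∧ x ∉ N := by
    by_contra h
    push_neg at h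
    exact hDpos (measure_mono_null (fun y hy => h y hy) hN)
  have hlocal : ∀ ε : ℝ, 0 < ε → 0 < ν {y : ℝ | |y - x| ≤ ε} := by
    intro ε hε
    obtain ⟨q, hq1, hq2⟩ := exists_rat_btwn (show x - ε < x by linarith)
    obtain ⟨q', hq1', hq2'⟩ := exists_rat_btwn (show x < x + ε by linarith)
    have hne : ν (Set.Ioo (q:ℝ) (q':ℝ)) ≠ 0 := by
      intro h0
      exact hxN (Set.mem_iUnion.mpr ⟨(q, q'), Set.mem_iUnion.mpr ⟨h0, hq2, hq1'⟩⟩)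
    refine lt_of_lt_of_le (pos_iff_ne_zero.mpr hne) (measure_mono ?_)
    rintro y ⟨hy1, hy2⟩
    have : |y - x| ≤ ε := abs_le.mpr ⟨by linarith, by linarith⟩
    exact this
  set r : ℝ := M/(4*(β:ℝ)) with hrdef
  have hr0 : 0 < r := by positivity
  have hxU : ∀ n, x ∈ U n := fun n => Set.mem_iInter.mp hxD n
  -- annuli around x are null
  have hann : ∀ σ : ℝ, 0 < σ → ν {y : ℝ | σ ≤ |y - x| ∧ |y - x| ≤ r} = 0 := by
    intro σ hσ
    have hbound : ∀ m : ℕ, ν {y : ℝ | σ ≤ |y - x| ∧ |y - x| ≤ r} ≤ ENNReal.ofReal (t m) := by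
      intro m
      obtain ⟨n₀, hn₀⟩ := exists_nat_gt (2/σ)
      have hs₀ : 2/((n₀:ℝ)+1) < σ := by
        rw [div_lt_iff₀ (by positivity)]
        have h2 : 2/σ < (n₀:ℝ) := hn₀
        rw [div_lt_iff₀ hσ] at h2
        nlinarith
      obtain ⟨j, hj⟩ := Set.mem_iUnion.mp (hxU (max m n₀))
      set k := max m n₀ + j with hkdef
      have hkm : m ≤ k := le_trans (le_max_left _ _) (Nat.le_add_right _ _)
      have hkn₀ : n₀ ≤ k := le_trans (le_max_right _ _) (Nat.le_add_right _ _)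
      have hsk : 8 * t k / M = 2/((k:ℝ)+1) := by
        rw [htdef]
        field_simp
        ring
      have hsk2 : 8 * t k / M ≤ σ := by
        rw [hsk]
        refine le_trans ?_ hs₀.le
        have h1 : (n₀:ℝ) + 1 ≤ (k:ℝ) + 1 := by exact_mod_cast Nat.succ_le_succ hkn₀
        exact div_le_div_of_nonneg_left (by norm_num) (by positivity) h1
      have hsubann : {y : ℝ | σ ≤ |y - x| ∧ |y - x| ≤ r} ⊆
          {y : ℝ | 8*(t k)/M ≤ |y - x| ∧ |y - x| ≤ M/(4*β)} := by
        rintro y ⟨hy1, hy2⟩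
        exact ⟨le_trans hsk2 hy1, by rwa [← hrdef]⟩
      calc ν {y : ℝ | σ ≤ |y - x| ∧ |y - x| ≤ r}
          ≤ ENNReal.ofReal (t k) := le_trans (measure_mono hsubann) ((key k).2.2 x hj)
        _ ≤ ENNReal.ofReal (t m) := ENNReal.ofReal_le_ofReal (htanti hkm)
    have htt : Tendsto (fun m : ℕ => ENNReal.ofReal (t m)) atTop (𝓝 0) := by
      have h1 : Tendsto (fun m : ℕ => t m) atTop (𝓝 0) := by
        have h2 : Tendsto (fun m : ℕ => (M/4) * (1/((m:ℝ)+1))) atTop (𝓝 ((M/4) * 0)) :=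
          tendsto_const_nhds.mul tendsto_one_div_add_atTop_nhds_zero_nat
        rw [mul_zero] at h2
        refine h2.congr fun m => ?_
        rw [htdef]
        field_simp
      have := ENNReal.tendsto_ofReal h1
      simpa using this
    have := ge_of_tendsto htt (Eventually.of_forall hbound)
    exact le_antisymm this zero_le
  -- the punctured half-ball is null
  have hpunct : ν {y : ℝ | 0 < |y - x| ∧ |y - x| ≤ r/2} = 0 := by
    have h0 : ν (⋃ m : ℕ, {y : ℝ | 1/((m:ℝ)+1) ≤ |y - x| ∧ |y - x| ≤ r}) = 0 :=
      measure_iUnion_null fun m => hann _ (by positivity)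
    refine measure_mono_null ?_ h0
    rintro y ⟨hy1, hy2⟩
    obtain ⟨m, hm⟩ := exists_nat_one_div_lt hy1
    exact Set.mem_iUnion.mpr ⟨m, hm.le, by linarith⟩
  have hsplit : {y : ℝ | |y - x| ≤ r/2} = {x} ∪ {y : ℝ | 0 < |y - x| ∧ |y - x| ≤ r/2} := by
    ext y
    constructor
    · intro hy
      by_cases hyx : y = x
      · exact Or.inl hyx
      · exact Or.inr ⟨abs_pos.mpr (sub_ne_zero.mpr hyx), hy⟩
    · rintro (hy | hy)
      · simp only [Set.mem_singleton_iff] at hy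
        subst hy
        simp only [Set.mem_setOf_eq, sub_self, abs_zero]
        positivity
      · exact hy.2
  have hνeq : ν {y : ℝ | |y - x| ≤ r/2} = ν {x} := by
    refine le_antisymm ?_ (measure_mono (fun y hy => by
      simp only [Set.mem_singleton_iff] at hy
      subst hy
      simp only [Set.mem_setOf_eq, sub_self, abs_zero]
      positivity))
    · rw [hsplit]
      calc ν ({x} ∪ {y : ℝ | 0 < |y - x| ∧ |y - x| ≤ r/2})
          ≤ ν {x} + ν {y : ℝ | 0 < |y - x| ∧ |y - x| ≤ r/2} := measure_union_le _ _
        _ = ν {x} := by rw [hpunct, add_zero]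
  exact ⟨x, r/2, by positivity, hνeq, hνeq ▸ hlocal (r/2) (by positivity)⟩


/-- Aizenman–Wehr positivity criterion: for a Borel probability measure `ν` on `ℝ` and
`0 < β < ∞`, the quantity
`θ_ν(M,β) = inf { (∫ g² dν)^{1/2} : g ∈ C¹, Lip(g) ≤ 1, Lip(g′) ≤ β, ∫ g′ dν = M }`
(`inf ∅ = ∞`) is positive for every `M > 0` if and only if `ν` has no isolated point
masses.  (The squared integral is taken as a lower Lebesgue integral, so that it is
meaningful, possibly infinite, for every admissible `g`.) -/
theorem theta_pos_iff_no_isolated_point_mass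
    (ν : Measure ℝ) [IsProbabilityMeasure ν] (β : ℝ≥0) (hβ : 0 < β) :
    (∀ M : ℝ, 0 < M →
      0 < ⨅ g : {g : ℝ → ℝ // ContDiff ℝ 1 g ∧ LipschitzWith 1 g ∧
              LipschitzWith β (deriv g) ∧ (∫ x, deriv g x ∂ν) = M},
            (∫⁻ x, ENNReal.ofReal ((g.1 x) ^ 2) ∂ν) ^ (1 / 2 : ℝ)) ↔
      ¬∃ (x : ℝ) (δ : ℝ), 0 < δ ∧ ν {y : ℝ | |y - x| ≤ δ} = ν {x} ∧ 0 < ν {x} := by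
  constructor
  · intro hpos
    rintro ⟨x, δ, hδ, heq, hm⟩
    obtain ⟨M, hM, g, hc, hl1, hlβ, hint, hzero⟩ :=
      bump_construction ν β hβ x δ hδ heq hm
    have h1 := hpos M hM
    have h2 : (⨅ g : {g : ℝ → ℝ // ContDiff ℝ 1 g ∧ LipschitzWith 1 g ∧
        LipschitzWith β (deriv g) ∧ (∫ x, deriv g x ∂ν) = M},
        (∫⁻ x, ENNReal.ofReal ((g.1 x) ^ 2) ∂ν) ^ (1 / 2 : ℝ)) ≤ 0 := by
      have := iInf_le (fun g : {g : ℝ → ℝ // ContDiff ℝ 1 g ∧ LipschitzWith 1 g ∧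
        LipschitzWith β (deriv g) ∧ (∫ x, deriv g x ∂ν) = M} =>
          (∫⁻ x, ENNReal.ofReal ((g.1 x) ^ 2) ∂ν) ^ (1 / 2 : ℝ))
        ⟨g, hc, hl1, hlβ, hint⟩
      refine le_trans this ?_
      simp only [hzero]
      rw [ENNReal.zero_rpow_of_pos (by norm_num)]
    exact absurd (lt_of_lt_of_le h1 h2) (by simp)
  · intro hno M hM
    by_contra h0
    have hz : (⨅ g : {g : ℝ → ℝ // ContDiff ℝ 1 g ∧ LipschitzWith 1 g ∧
        LipschitzWith β (deriv g) ∧ (∫ x, deriv g x ∂ν) = M},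
        (∫⁻ x, ENNReal.ofReal ((g.1 x) ^ 2) ∂ν) ^ (1 / 2 : ℝ)) = 0 := by
      by_contra hne
      exact h0 (pos_iff_ne_zero.mpr hne)
    have H : ∀ n : ℕ, ∃ g : ℝ → ℝ, ContDiff ℝ 1 g ∧ LipschitzWith 1 g ∧
        LipschitzWith β (deriv g) ∧ (∫ y, deriv g y ∂ν) = M ∧
        (∫⁻ y, ENNReal.ofReal ((g y) ^ 2) ∂ν) <
          ENNReal.ofReal ((M/(4*((n:ℝ)+1)))^2 * (M/(4*((n:ℝ)+1)))) := by
      intro n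
      set b : ℝ≥0∞ := ENNReal.ofReal ((M/(4*((n:ℝ)+1)))^2 * (M/(4*((n:ℝ)+1)))) with hb
      have hb0 : 0 < b := by
        rw [hb, ENNReal.ofReal_pos]
        positivity
      have hbr : 0 < b ^ (1/2 : ℝ) :=
        ENNReal.rpow_pos hb0 ENNReal.ofReal_ne_top
      have hlt : (⨅ g : {g : ℝ → ℝ // ContDiff ℝ 1 g ∧ LipschitzWith 1 g ∧
          LipschitzWith β (deriv g) ∧ (∫ x, deriv g x ∂ν) = M},
          (∫⁻ x, ENNReal.ofReal ((g.1 x) ^ 2) ∂ν) ^ (1 / 2 : ℝ)) < b ^ (1/2 : ℝ) := by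
        rw [hz]; exact hbr
      obtain ⟨⟨g, hc, hl1, hlβ, hint⟩, hg⟩ := iInf_lt_iff.mp hlt
      refine ⟨g, hc, hl1, hlβ, hint, ?_⟩
      by_contra hge
      push_neg at hge
      exact absurd (lt_of_le_of_lt (ENNReal.rpow_le_rpow hge (by norm_num)) hg) (lt_irrefl _)
    choose G hGc hGl1 hGlβ hGint hGL using H
    exact hno (aw_aggregate ν β hβ M hM G hGc hGl1 hGlβ hGint hGL)
end

section
/- Let ν be a Borel probability measure on ℝ and let 0 < β < ∞. Define γ_ν(M, β) := inf { (∫ g(x)² ν(dx))^{1/2} : g ∈ C¹(ℝ), Lip(g) ≤ 1, Lip(g′) ≤ β, g′(x) ≥ 0 for all x, ∫ g′(x) ν(dx) = M } (with the convention inf ∅ = +∞). Then γ_ν(M, β) > 0 for every M > 0 if and only if ν is not concentrated at a single point, i.e., ν is not a Dirac measure. -/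
open MeasureTheory Set
open scoped ENNReal NNReal

lemma mvt_aux {g : ℝ → ℝ} (hg : Differentiable ℝ g) {u v m : ℝ} (huv : u ≤ v)
    (hm : ∀ x ∈ Icc u v, m ≤ deriv g x) : m * (v - u) ≤ g v - g u :=
  (convex_Icc u v).mul_sub_le_image_sub_of_le_deriv hg.continuous.continuousOn
    hg.differentiableOn (fun x hx => hm x (interior_subset hx)) u ⟨le_rfl, huv⟩ v ⟨huv, le_rfl⟩ huv

lemma lip_lower {f : ℝ → ℝ} {K : ℝ≥0} (h : LipschitzWith K f) (x y : ℝ) :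
    f x - K * |x - y| ≤ f y := by
  have h1 := h.dist_le_mul x y
  rw [Real.dist_eq, Real.dist_eq] at h1
  have h2 : f x - f y ≤ K * |x - y| := le_trans (le_abs_self _) h1
  linarith

lemma lint_lower {ν : Measure ℝ} {s : Set ℝ} (hs : MeasurableSet s) {g : ℝ → ℝ}
    {K : ℝ} (h : ∀ x ∈ s, K ^ 2 ≤ (g x) ^ 2) :
    ENNReal.ofReal (K ^ 2) * ν s ≤ ∫⁻ x, ENNReal.ofReal ((g x) ^ 2) ∂ν := by
  calc ENNReal.ofReal (K^2) * ν s = ∫⁻ _ in s, ENNReal.ofReal (K^2) ∂ν := (setLIntegral_const s _).symm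
    _ ≤ ∫⁻ x in s, ENNReal.ofReal ((g x)^2) ∂ν :=
        setLIntegral_mono' hs fun x hx => ENNReal.ofReal_le_ofReal (h x hx)
    _ ≤ _ := setLIntegral_le_lintegral _ _

lemma deriv_le_one {g : ℝ → ℝ} (h : LipschitzWith 1 g) (x : ℝ) : deriv g x ≤ 1 := by
  have h1 : ‖deriv g x‖ ≤ ((1:ℝ≥0):ℝ) := norm_deriv_le_of_lipschitz (𝕜 := ℝ) h
  rw [Real.norm_eq_abs] at h1
  calc deriv g x ≤ |deriv g x| := le_abs_self _
    _ ≤ 1 := by simpa using h1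

set_option maxHeartbeats 1000000 in
lemma key_lemma (ν : Measure ℝ) [IsProbabilityMeasure ν] (β : ℝ≥0) (hβ : 0 < β)
    {M a b : ℝ} (hM : 0 < M) (hab : a < b) (ha : 0 < ν (Iic a)) (hb : 0 < ν (Ici b)) :
    ∃ κ : ℝ≥0∞, 0 < κ ∧ κ ≠ ⊤ ∧ ∀ g : ℝ → ℝ, ContDiff ℝ 1 g → LipschitzWith 1 g →
      LipschitzWith β (deriv g) → (∀ x, 0 ≤ deriv g x) → (∫ x, deriv g x ∂ν) = M →
      κ ≤ ∫⁻ x, ENNReal.ofReal ((g x) ^ 2) ∂ν := by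
  have hB : 0 < (β : ℝ) := hβ
  obtain ⟨σ, hσdef⟩ : ∃ σ : ℝ, σ = M / 16 := ⟨_, rfl⟩
  have hσ : 0 < σ := by rw [hσdef]; positivity
  obtain ⟨ℓ, hℓdef⟩ : ∃ ℓ : ℝ, ℓ = min (σ / (2 * (β:ℝ))) ((b - a) / 2) := ⟨_, rfl⟩
  have hℓ : 0 < ℓ := by rw [hℓdef]; exact lt_min (by positivity) (by linarith)
  have hℓ1 : ℓ ≤ σ / (2 * (β:ℝ)) := hℓdef ▸ min_le_left _ _
  have hℓ2 : ℓ ≤ (b - a) / 2 := hℓdef ▸ min_le_right _ _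
  obtain ⟨H, hHdef⟩ : ∃ H : ℝ, H = M ^ 2 / (512 * (β:ℝ)) := ⟨_, rfl⟩
  have hH : 0 < H := by rw [hHdef]; positivity
  obtain ⟨c, hcdef⟩ : ∃ c : ℝ, c = min (σ * ℓ / 4) H := ⟨_, rfl⟩
  have hc : 0 < c := by rw [hcdef]; exact lt_min (by positivity) hH
  have hc1 : c ≤ σ * ℓ / 4 := hcdef ▸ min_le_left _ _
  have hc2 : c ≤ H := hcdef ▸ min_le_right _ _
  obtain ⟨ρ, hρdef⟩ : ∃ ρ : ℝ, ρ = M / (16 * (β:ℝ)) := ⟨_, rfl⟩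
  have hρ : 0 < ρ := by rw [hρdef]; positivity
  have hBρ : (β:ℝ) * ρ = M / 16 := by rw [hρdef]; field_simp
  have h2H : M ^ 2 / (256 * (β:ℝ)) = 2 * H := by rw [hHdef]; field_simp; ring
  have hMρ : M / 16 * ρ = M ^ 2 / (256 * (β:ℝ)) := by rw [hρdef]; field_simp; ring
  refine ⟨min (ENNReal.ofReal (c ^ 2) * min (ν (Iic a)) (ν (Ici b)))
      (ENNReal.ofReal (H ^ 2) * ENNReal.ofReal (M / 8)), ?_, ?_, ?_⟩
  · refine lt_min (ENNReal.mul_pos ?_ ?_) (ENNReal.mul_pos ?_ ?_)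
    · exact (ENNReal.ofReal_pos.mpr (by positivity)).ne'
    · exact (lt_min ha hb).ne'
    · exact (ENNReal.ofReal_pos.mpr (by positivity)).ne'
    · exact (ENNReal.ofReal_pos.mpr (by positivity)).ne'
  · exact (lt_of_le_of_lt (min_le_right _ _)
      (ENNReal.mul_lt_top ENNReal.ofReal_lt_top ENNReal.ofReal_lt_top)).ne
  · intro g hg hL1 hLd hd0 hint
    have hdiff : Differentiable ℝ g := hg.differentiable one_ne_zero
    have hmono : Monotone g := monotone_of_deriv_nonneg hdiff hd0
    have hder_cont : Continuous (deriv g) := hg.continuous_deriv le_rfl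
    have hder_le1 : ∀ x, deriv g x ≤ 1 := deriv_le_one hL1
    by_cases hga : g a ≤ -c
    · refine le_trans (min_le_left _ _) (le_trans (mul_le_mul_right (min_le_left _ _) _)
        (lint_lower measurableSet_Iic ?_))
      intro y hy
      have h1 : g y ≤ -c := le_trans (hmono hy) hga
      calc c ^ 2 ≤ (-(g y)) ^ 2 := pow_le_pow_left₀ hc.le (by linarith) 2
        _ = (g y) ^ 2 := by ring
    by_cases hgb : c ≤ g b
    · refine le_trans (min_le_left _ _) (le_trans (mul_le_mul_right (min_le_right _ _) _)
        (lint_lower measurableSet_Ici ?_))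
      intro y hy
      have h1 : c ≤ g y := le_trans hgb (hmono hy)
      exact pow_le_pow_left₀ hc.le h1 2
    push_neg at hga hgb
    -- slope bound on [a,b]
    have hslope : ∀ x₀ ∈ Icc a b, deriv g x₀ < σ := by
      intro x₀ hx₀
      by_contra hcon
      push_neg at hcon
      have hgab : g b - g a < 2 * c := by linarith
      have hBℓ : (β:ℝ) * ℓ ≤ σ / 2 := by
        calc (β:ℝ) * ℓ ≤ (β:ℝ) * (σ / (2 * (β:ℝ))) := by nlinarith
          _ = σ / 2 := by field_simp
      rcases le_or_gt x₀ ((a + b) / 2) with hmid | hmid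
      · have hlb : ∀ x ∈ Icc x₀ (x₀ + ℓ), σ / 2 ≤ deriv g x := by
          intro x hx
          have h1 := lip_lower hLd x₀ x
          have h2 : |x₀ - x| ≤ ℓ := abs_le.mpr ⟨by linarith [hx.2], by linarith [hx.1]⟩
          have h3 : (β:ℝ) * |x₀ - x| ≤ (β:ℝ) * ℓ := by nlinarith [abs_nonneg (x₀ - x)]
          linarith
        have hm := mvt_aux hdiff (by linarith : x₀ ≤ x₀ + ℓ) hlb
        have h5 : g (x₀ + ℓ) ≤ g b := hmono (by linarith [hx₀.1] : x₀ + ℓ ≤ b)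
        have h6 : g a ≤ g x₀ := hmono hx₀.1
        nlinarith
      · have hlb : ∀ x ∈ Icc (x₀ - ℓ) x₀, σ / 2 ≤ deriv g x := by
          intro x hx
          have h1 := lip_lower hLd x₀ x
          have h2 : |x₀ - x| ≤ ℓ := abs_le.mpr ⟨by linarith [hx.2], by linarith [hx.1]⟩
          have h3 : (β:ℝ) * |x₀ - x| ≤ (β:ℝ) * ℓ := by nlinarith [abs_nonneg (x₀ - x)]
          linarith
        have hm := mvt_aux hdiff (by linarith : x₀ - ℓ ≤ x₀) hlb
        have h5 : g x₀ ≤ g b := hmono hx₀.2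
        have h6 : g a ≤ g (x₀ - ℓ) := hmono (by linarith [hx₀.2] : a ≤ x₀ - ℓ)
        nlinarith
    -- integrability
    have hInt : Integrable (deriv g) ν := by
      refine (integrable_const (1 : ℝ)).mono' hder_cont.aestronglyMeasurable ?_
      exact ae_of_all _ fun x => by
        rw [Real.norm_eq_abs, abs_of_nonneg (hd0 x)]; exact hder_le1 x
    have hν1 : ∀ s : Set ℝ, (ν s).toReal ≤ 1 := by
      intro s
      have h1 : ν s ≤ 1 := prob_le_one
      calc (ν s).toReal ≤ (1 : ℝ≥0∞).toReal := ENNReal.toReal_mono ENNReal.one_ne_top h1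
        _ = 1 := by simp
    have hνnn : ∀ s : Set ℝ, 0 ≤ (ν s).toReal := fun s => ENNReal.toReal_nonneg
    -- split integral
    have hsplit := integral_add_compl (measurableSet_Icc (a := a) (b := b)) hInt (μ := ν)
    rw [hint] at hsplit
    have hIccle : ∫ x in Icc a b, deriv g x ∂ν ≤ σ := by
      have h1 : ∫ x in Icc a b, deriv g x ∂ν ≤ ∫ x in Icc a b, σ ∂ν :=
        setIntegral_mono_on hInt.integrableOn
          (integrableOn_const (measure_ne_top _ _))
          measurableSet_Icc fun x hx => (hslope x hx).le
      rw [setIntegral_const, smul_eq_mul, measureReal_def] at h1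
      nlinarith [hν1 (Icc a b), hνnn (Icc a b)]
    have hcompl : M - σ ≤ ∫ x in (Icc a b)ᶜ, deriv g x ∂ν := by linarith
    have hcIcc : (Icc a b)ᶜ = Iio a ∪ Ioi b := by
      ext x
      simp only [mem_compl_iff, mem_Icc, mem_Iio, mem_Ioi, mem_union, not_and_or, not_le]
    rw [hcIcc] at hcompl
    have hdisj : Disjoint (Iio a) (Ioi b) := by
      rw [disjoint_left]
      intro x h1 h2
      simp only [mem_Iio, mem_Ioi] at h1 h2
      linarith
    rw [setIntegral_union hdisj measurableSet_Ioi hInt.integrableOn hInt.integrableOn] at hcompl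
    have hM4 : M / 4 ≤ ∫ x in Iio a, deriv g x ∂ν ∨ M / 4 ≤ ∫ x in Ioi b, deriv g x ∂ν := by
      by_contra hno
      push_neg at hno
      obtain ⟨h1, h2⟩ := hno
      linarith
    -- common machinery for the tail set
    have tail_bound : ∀ s : Set ℝ, MeasurableSet s →
        M / 4 ≤ ∫ x in s, deriv g x ∂ν →
        ENNReal.ofReal (M / 8) ≤ ν (s ∩ {y | M / 8 ≤ deriv g y}) := by
      intro s hs hIs
      obtain ⟨T, hTdef⟩ : ∃ T : Set ℝ, T = s ∩ {y | M / 8 ≤ deriv g y} := ⟨_, rfl⟩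
      have hTmeas : MeasurableSet T := by
        rw [hTdef]
        exact hs.inter (measurableSet_le measurable_const hder_cont.measurable)
      obtain ⟨R, hRdef⟩ : ∃ R : Set ℝ, R = s ∩ {y | deriv g y < M / 8} := ⟨_, rfl⟩
      have hRmeas : MeasurableSet R := by
        rw [hRdef]
        exact hs.inter (measurableSet_lt hder_cont.measurable measurable_const)
      have hdisj2 : Disjoint T R := by
        rw [hTdef, hRdef, disjoint_left]
        rintro y ⟨-, h1⟩ ⟨-, h2⟩
        simp only [mem_setOf_eq] at h1 h2
        exact absurd h1 (not_le.mpr h2)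
      have hTR : (s ∩ {y | M / 8 ≤ deriv g y}) ∪ (s ∩ {y | deriv g y < M / 8}) = s := by
        rw [← inter_union_distrib_left]
        have : {y : ℝ | M / 8 ≤ deriv g y} ∪ {y : ℝ | deriv g y < M / 8} = univ :=
          eq_univ_of_forall fun y => (le_or_gt (M/8) (deriv g y)).imp id id
        rw [this, inter_univ]
      have hsum : ∫ x in s, deriv g x ∂ν
          = ∫ x in T, deriv g x ∂ν + ∫ x in R, deriv g x ∂ν := by
        rw [← setIntegral_union hdisj2 hRmeas hInt.integrableOn hInt.integrableOn, hTdef, hRdef, hTR]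
      have hTb : ∫ x in T, deriv g x ∂ν ≤ (ν T).toReal := by
        have h1 : ∫ x in T, deriv g x ∂ν ≤ ∫ x in T, (1:ℝ) ∂ν :=
          setIntegral_mono_on hInt.integrableOn
            (integrableOn_const (measure_ne_top _ _))
            hTmeas fun x _ => hder_le1 x
        rw [setIntegral_const, smul_eq_mul, mul_one] at h1
        exact h1
      have hRb : ∫ x in R, deriv g x ∂ν ≤ M / 8 := by
        have h1 : ∫ x in R, deriv g x ∂ν ≤ ∫ x in R, (M/8 : ℝ) ∂ν :=
          setIntegral_mono_on hInt.integrableOn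
            (integrableOn_const (measure_ne_top _ _))
            hRmeas fun x hx => by
              have := hRdef ▸ hx
              exact this.2.le
        rw [setIntegral_const, smul_eq_mul, measureReal_def] at h1
        nlinarith [hν1 R, hνnn R]
      have h1 : M / 8 ≤ (ν T).toReal := by linarith
      rw [← hTdef]
      exact ENNReal.ofReal_le_of_le_toReal h1
    rcases hM4 with hI | hI
    · -- mass to the left of a
      obtain ⟨T, hTdef⟩ : ∃ T : Set ℝ, T = Iio a ∩ {y | M / 8 ≤ deriv g y} := ⟨_, rfl⟩
      have hTmeas : MeasurableSet T := by
        rw [hTdef]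
        exact measurableSet_Iio.inter (measurableSet_le measurable_const hder_cont.measurable)
      have hνT := tail_bound (Iio a) measurableSet_Iio hI
      rw [← hTdef] at hνT
      have hpt : ∀ y ∈ T, H ^ 2 ≤ (g y) ^ 2 := by
        intro y hy
        rw [hTdef] at hy
        obtain ⟨hy1, hy2⟩ := hy
        simp only [mem_Iio] at hy1
        simp only [mem_setOf_eq] at hy2
        have hda : deriv g a < σ := hslope a ⟨le_rfl, hab.le⟩
        have h2 := lip_lower hLd y a
        have habs : |y - a| = a - y := by rw [abs_of_nonpos (by linarith)]; ring
        rw [habs] at h2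
        have h4 : y + ρ ≤ a := by
          have h3 : M / 16 ≤ (β:ℝ) * (a - y) := by linarith
          have : ρ ≤ a - y := by
            rw [hρdef, div_le_iff₀ (by positivity)]
            nlinarith
          linarith
        have hlb : ∀ x ∈ Icc y (y + ρ), M / 16 ≤ deriv g x := by
          intro x hx
          have h5 := lip_lower hLd y x
          have h6 : |y - x| ≤ ρ := abs_le.mpr ⟨by linarith [hx.2], by linarith [hx.1]⟩
          have h7 : (β:ℝ) * |y - x| ≤ (β:ℝ) * ρ := by nlinarith [abs_nonneg (y - x)]
          linarith
        have hm := mvt_aux hdiff (by linarith : y ≤ y + ρ) hlb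
        have h9 : g (y + ρ) ≤ g b := hmono (by linarith)
        have h12 : g y ≤ -H := by nlinarith
        calc H ^ 2 ≤ (-(g y)) ^ 2 := pow_le_pow_left₀ hH.le (by linarith) 2
          _ = (g y) ^ 2 := by ring
      exact le_trans (min_le_right _ _)
        (le_trans (mul_le_mul_right hνT _) (lint_lower hTmeas hpt))
    · -- mass to the right of b
      obtain ⟨T, hTdef⟩ : ∃ T : Set ℝ, T = Ioi b ∩ {y | M / 8 ≤ deriv g y} := ⟨_, rfl⟩
      have hTmeas : MeasurableSet T := by
        rw [hTdef]
        exact measurableSet_Ioi.inter (measurableSet_le measurable_const hder_cont.measurable)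
      have hνT := tail_bound (Ioi b) measurableSet_Ioi hI
      rw [← hTdef] at hνT
      have hpt : ∀ y ∈ T, H ^ 2 ≤ (g y) ^ 2 := by
        intro y hy
        rw [hTdef] at hy
        obtain ⟨hy1, hy2⟩ := hy
        simp only [mem_Ioi] at hy1
        simp only [mem_setOf_eq] at hy2
        have hdb : deriv g b < σ := hslope b ⟨hab.le, le_rfl⟩
        have h2 := lip_lower hLd y b
        have habs : |y - b| = y - b := by rw [abs_of_nonneg (by linarith)]
        rw [habs] at h2
        have h4 : b ≤ y - ρ := by
          have h3 : M / 16 ≤ (β:ℝ) * (y - b) := by linarith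
          have : ρ ≤ y - b := by
            rw [hρdef, div_le_iff₀ (by positivity)]
            nlinarith
          linarith
        have hlb : ∀ x ∈ Icc (y - ρ) y, M / 16 ≤ deriv g x := by
          intro x hx
          have h5 := lip_lower hLd y x
          have h6 : |y - x| ≤ ρ := abs_le.mpr ⟨by linarith [hx.2], by linarith [hx.1]⟩
          have h7 : (β:ℝ) * |y - x| ≤ (β:ℝ) * ρ := by nlinarith [abs_nonneg (y - x)]
          linarith
        have hm := mvt_aux hdiff (by linarith : y - ρ ≤ y) hlb
        have h9 : g a ≤ g (y - ρ) := hmono (by linarith)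
        have h12 : H ≤ g y := by nlinarith
        exact pow_le_pow_left₀ hH.le h12 2
      exact le_trans (min_le_right _ _)
        (le_trans (mul_le_mul_right hνT _) (lint_lower hTmeas hpt))


lemma exists_two_sided_mass (ν : Measure ℝ) [IsProbabilityMeasure ν]
    (h : ¬∃ x : ℝ, ν = Measure.dirac x) :
    ∃ a b : ℝ, a < b ∧ 0 < ν (Iic a) ∧ 0 < ν (Ici b) := by
  by_contra hc
  push_neg at hc
  -- hc : ∀ a b, a < b → 0 < ν (Iic a) → ν (Ici b) ≤ 0
  have hF1 : ∀ t u : ℝ, t < u → 0 < ν (Iic t) → ν (Iic u) = 1 := by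
    intro t u htu ht
    have hb : ν (Ici ((t + u) / 2)) = 0 :=
      le_antisymm (hc t ((t+u)/2) (by linarith) ht) zero_le'
    have h1 : ν (Iio ((t + u) / 2)) = 1 := by
      have := measure_compl (measurableSet_Ici (a := (t+u)/2)) (measure_ne_top ν _)
      rw [compl_Ici, hb] at this
      simpa using this
    refine le_antisymm prob_le_one ?_
    rw [← h1]
    exact measure_mono (Iio_subset_Iic_self.trans (Iic_subset_Iic.mpr (by linarith)))
  have hex : ∃ t : ℝ, 0 < ν (Iic t) := by
    by_contra hno
    push_neg at hno
    have hz : ∀ n : ℕ, ν (Iic (n : ℝ)) = 0 := fun n => le_antisymm (hno _) zero_le'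
    have : ν (⋃ n : ℕ, Iic (n : ℝ)) = 0 := measure_iUnion_null hz
    rw [show (⋃ n : ℕ, Iic (n : ℝ)) = univ from eq_univ_of_forall (fun x => by
      obtain ⟨n, hn⟩ := exists_nat_ge x
      exact mem_iUnion.2 ⟨n, hn⟩)] at this
    simp [measure_univ] at this
  obtain ⟨t, ht⟩ := hex
  set S : Set ℝ := {t | ν (Iic t) = 1} with hS
  have hSne : S.Nonempty := ⟨t + 1, hF1 t (t + 1) (lt_add_one t) ht⟩
  have hex0 : ∃ t₁ : ℝ, ν (Iic t₁) = 0 := by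
    by_contra hno
    push_neg at hno
    have hall : ∀ t : ℝ, ν (Iic t) = 1 := fun u =>
      hF1 (u - 1) u (by linarith) (pos_iff_ne_zero.mpr (hno _))
    have hz : ∀ n : ℕ, ν (Ioi (-(n : ℝ))) = 0 := by
      intro n
      have := measure_compl (measurableSet_Iic (a := (-(n:ℝ)))) (measure_ne_top ν _)
      rw [compl_Iic, hall] at this
      simpa using this
    have : ν (⋃ n : ℕ, Ioi (-(n : ℝ))) = 0 := measure_iUnion_null hz
    rw [show (⋃ n : ℕ, Ioi (-(n : ℝ))) = univ from eq_univ_of_forall (fun x => by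
      obtain ⟨n, hn⟩ := exists_nat_gt (-x)
      exact mem_iUnion.2 ⟨n, mem_Ioi.mpr (by linarith)⟩)] at this
    simp [measure_univ] at this
  obtain ⟨t₁, ht₁⟩ := hex0
  have hbdd : BddBelow S := by
    refine ⟨t₁, fun s hs => ?_⟩
    by_contra hlt
    push_neg at hlt
    have : ν (Iic s) ≤ ν (Iic t₁) := measure_mono (Iic_subset_Iic.mpr hlt.le)
    rw [hs, ht₁] at this
    exact one_ne_zero (le_antisymm this zero_le')
  set x := sInf S with hx
  have hlow : ∀ u : ℝ, u < x → ν (Iic u) = 0 := by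
    intro u hu
    by_contra hpos
    have h1 : ν (Iic ((u + x) / 2)) = 1 := hF1 u _ (by linarith) (pos_iff_ne_zero.mpr hpos)
    have : x ≤ (u + x) / 2 := csInf_le hbdd h1
    linarith
  have hhigh : ∀ u : ℝ, x < u → ν (Iic u) = 1 := by
    intro u hu
    obtain ⟨s, hsS, hst⟩ := exists_lt_of_csInf_lt hSne hu
    refine le_antisymm prob_le_one ?_
    rw [← hsS]
    exact measure_mono (Iic_subset_Iic.mpr hst.le)
  have hxx : ν (Iic x) = 1 := by
    have hIoi : ν (Ioi x) = 0 := by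
      have hz : ∀ n : ℕ, ν (Ici (x + 1 / ((n : ℝ) + 1))) = 0 := by
        intro n
        have hε : 0 < 1 / ((n : ℝ) + 1) := by positivity
        have h1 : ν (Iic (x + 1 / ((n : ℝ) + 1) / 2)) = 1 := hhigh _ (by linarith)
        have := measure_compl (measurableSet_Iic (a := x + 1 / ((n:ℝ)+1) / 2)) (measure_ne_top ν _)
        rw [compl_Iic, h1] at this
        simp only [measure_univ] at this
        have hsub : Ici (x + 1 / ((n : ℝ) + 1)) ⊆ Ioi (x + 1 / ((n : ℝ) + 1) / 2) :=
          fun y hy => lt_of_lt_of_le (show x + 1 / ((n : ℝ) + 1) / 2 < x + 1 / ((n : ℝ) + 1) by linarith) hy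
        exact le_antisymm (le_trans (measure_mono hsub) (by rw [this]; simp)) zero_le'
      have hun : Ioi x = ⋃ n : ℕ, Ici (x + 1 / ((n : ℝ) + 1)) := by
        ext y
        simp only [mem_Ioi, mem_iUnion, mem_Ici]
        constructor
        · intro hy
          obtain ⟨n, hn⟩ := exists_nat_one_div_lt (show (0:ℝ) < y - x by linarith)
          exact ⟨n, by linarith⟩
        · rintro ⟨n, hn⟩
          have : 0 < 1 / ((n : ℝ) + 1) := by positivity
          linarith
      rw [hun]
      exact measure_iUnion_null hz
    have := measure_compl (measurableSet_Ioi (a := x)) (measure_ne_top ν _)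
    rw [compl_Ioi, hIoi] at this
    simpa using this
  refine h ⟨x, ?_⟩
  refine Measure.ext_of_Iic ν (Measure.dirac x) (fun u => ?_)
  rw [Measure.dirac_apply' x measurableSet_Iic]
  rcases lt_or_ge u x with hu | hu
  · rw [hlow u hu]
    simp [indicator, not_le.mpr hu]
  · have h1 : ν (Iic u) = 1 := by
      rcases eq_or_lt_of_le hu with rfl | hlt
      · exact hxx
      · exact hhigh u hlt
    rw [h1]
    simp [indicator, hu]

/-- Aizenman–Wehr positivity criterion (monotone version): for a Borel probability measure
`ν` on `ℝ` and `0 < β < ∞`, the quantity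
`γ_ν(M,β) = inf { (∫ g² dν)^{1/2} : g ∈ C¹, Lip(g) ≤ 1, Lip(g′) ≤ β, g′ ≥ 0, ∫ g′ dν = M }`
(`inf ∅ = ∞`) is positive for every `M > 0` if and only if `ν` is not concentrated at a
single point, i.e. is not a Dirac measure.  (The squared integral is taken as a lower
Lebesgue integral, so that it is meaningful, possibly infinite, for every admissible `g`.) -/
theorem gamma_pos_iff_not_dirac
    (ν : Measure ℝ) [IsProbabilityMeasure ν] (β : ℝ≥0) (hβ : 0 < β) :
    (∀ M : ℝ, 0 < M →
      0 < ⨅ g : {g : ℝ → ℝ // ContDiff ℝ 1 g ∧ LipschitzWith 1 g ∧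
              LipschitzWith β (deriv g) ∧ (∀ x : ℝ, 0 ≤ deriv g x) ∧
              (∫ x, deriv g x ∂ν) = M},
            (∫⁻ x, ENNReal.ofReal ((g.1 x) ^ 2) ∂ν) ^ (1 / 2 : ℝ)) ↔
      ¬∃ x : ℝ, ν = Measure.dirac x := by
  constructor
  · rintro h ⟨x, hx⟩
    subst hx
    have h1 := h 1 one_pos
    have hderiv : deriv (fun t : ℝ => t - x) = fun _ => 1 := by
      ext t
      simpa using ((hasDerivAt_id t).sub_const x).deriv
    have hmem : ContDiff ℝ 1 (fun t : ℝ => t - x) ∧ LipschitzWith 1 (fun t : ℝ => t - x) ∧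
        LipschitzWith β (deriv (fun t : ℝ => t - x)) ∧
        (∀ y : ℝ, 0 ≤ deriv (fun t : ℝ => t - x) y) ∧
        (∫ y, deriv (fun t : ℝ => t - x) y ∂(Measure.dirac x)) = 1 := by
      refine ⟨(contDiff_id.sub contDiff_const), ?_, ?_, ?_, ?_⟩
      · have : Isometry (fun t : ℝ => t - x) := Isometry.of_dist_eq fun u v => by
          simp [Real.dist_eq]
        exact this.lipschitz
      · rw [hderiv]
        exact (LipschitzWith.const (1:ℝ)).weaken zero_le'
      · intro y; rw [hderiv]; norm_num
      · rw [hderiv]; simp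
    have hle := iInf_le (fun g : {g : ℝ → ℝ // ContDiff ℝ 1 g ∧ LipschitzWith 1 g ∧
                LipschitzWith β (deriv g) ∧ (∀ x : ℝ, 0 ≤ deriv g x) ∧
                (∫ y, deriv g y ∂(Measure.dirac x)) = 1} =>
              (∫⁻ y, ENNReal.ofReal ((g.1 y) ^ 2) ∂(Measure.dirac x)) ^ (1 / 2 : ℝ))
      ⟨fun t : ℝ => t - x, hmem⟩
    have hz : (∫⁻ y, ENNReal.ofReal (((fun t : ℝ => t - x) y) ^ 2)
        ∂(Measure.dirac x)) ^ (1/2 : ℝ) = 0 := by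
      rw [lintegral_dirac]
      simp
    rw [hz] at hle
    exact absurd (lt_of_lt_of_le h1 hle) (lt_irrefl 0)
  · intro hnd M hM
    obtain ⟨a, b, hab, ha, hb⟩ := exists_two_sided_mass ν hnd
    obtain ⟨κ, hκ0, hκtop, hκle⟩ := key_lemma ν β hβ hM hab ha hb
    have hpos : 0 < κ ^ (1/2 : ℝ) := ENNReal.rpow_pos hκ0 hκtop
    refine lt_of_lt_of_le hpos (le_iInf fun g => ?_)
    obtain ⟨g, hg1, hg2, hg3, hg4, hg5⟩ := g
    exact ENNReal.rpow_le_rpow (hκle g hg1 hg2 hg3 hg4 hg5) (by norm_num)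
end

section
/- Consider the generalized zero range process on the torus Λ = (ℤ/Lℤ)^d (d ≥ 1, L ≥ 2) with a finite symmetric set of directions E ⊆ Λ∖{0} (q ∈ E ⟺ −q ∈ E), rates α_q(ν, n) ≥ 0 defined for q ∈ E, integers ν ≥ 1, n ≥ 0, with α_q(ν, n) = 0 unless 1 ≤ ν ≤ n, and single-site weights p : ℕ → (0, ∞). Suppose there exist functions g_q : {1,2,…} → [0, ∞), q ∈ E, such that α_q(ν, n) = g_q(ν)·p(n − ν)/p(n) for all q ∈ E and all 1 ≤ ν ≤ n. Then the product measure P(n) = ∏_{i∈Λ} p(n_i) is stationary: for every configuration n : Λ → ℕ, ∑_{i∈Λ} ∑_{q∈E} ∑_{ν=1}^{n_i} [ α_{−q}(ν, n_{i+q} + ν) · P(n^{i,q,ν}) − α_q(ν, n_i) · P(n) ] = 0. -/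
/-- The configuration obtained from `n` by moving `ν` particles from site `i` to site
`i + q` on the torus. -/
def updN {d L : ℕ} (n : (Fin d → ZMod L) → ℕ) (i q : Fin d → ZMod L) (ν : ℕ) :
    (Fin d → ZMod L) → ℕ :=
  fun j => if j = i then n i - ν else if j = i + q then n (i + q) + ν else n j

/-- Sufficiency for the generalized zero range process: if the rates have the product form
`α_q(ν,n) = g_q(ν) p(n−ν)/p(n)`, then the product measure `P(n) = ∏_i p(n_i)` is
stationary, i.e. the master-equation generator applied to `P` vanishes at every
configuration. -/
theorem gzrp_product_measure_stationary (d L : ℕ) (hd : 1 ≤ d) (hL : 2 ≤ L) [NeZero L]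
    (E : Finset (Fin d → ZMod L)) (hE0 : (0 : Fin d → ZMod L) ∉ E)
    (hEsym : ∀ q ∈ E, -q ∈ E)
    (α : (Fin d → ZMod L) → ℕ → ℕ → ℝ)
    (hαnn : ∀ q ν n, 0 ≤ α q ν n)
    (hαzero : ∀ q ν n, ¬(1 ≤ ν ∧ ν ≤ n) → α q ν n = 0)
    (p : ℕ → ℝ) (hp : ∀ n, 0 < p n)
    (g : (Fin d → ZMod L) → ℕ → ℝ)
    (hgnn : ∀ q ∈ E, ∀ ν : ℕ, 1 ≤ ν → 0 ≤ g q ν)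
    (hform : ∀ q ∈ E, ∀ ν n : ℕ, 1 ≤ ν → ν ≤ n → α q ν n = g q ν * p (n - ν) / p n) :
    ∀ n : (Fin d → ZMod L) → ℕ,
      ∑ i : Fin d → ZMod L, ∑ q ∈ E, ∑ ν ∈ Finset.Icc 1 (n i),
        (α (-q) ν (n (i + q) + ν) * ∏ j : Fin d → ZMod L, p (updN n i q ν j) -
          α q ν (n i) * ∏ j : Fin d → ZMod L, p (n j)) = 0 := by
  intro n
  have key : ∀ i : Fin d → ZMod L, ∀ q ∈ E, ∀ ν ∈ Finset.Icc 1 (n i),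
      α (-q) ν (n (i + q) + ν) * ∏ j : Fin d → ZMod L, p (updN n i q ν j) -
          α q ν (n i) * ∏ j : Fin d → ZMod L, p (n j)
        = (g (-q) ν - g q ν) *
            (p (n i - ν) / p (n i) * ∏ j : Fin d → ZMod L, p (n j)) := by
    intro i q hqE ν hν
    rw [Finset.mem_Icc] at hν
    obtain ⟨hν1, hν2⟩ := hν
    have hq0 : q ≠ 0 := fun h => hE0 (h ▸ hqE)
    have hiq : i ≠ i + q := by
      intro h
      exact hq0 (by simpa using (left_eq_add.mp h))
    have h1 : ∀ m : (Fin d → ZMod L) → ℕ,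
        ∏ j : Fin d → ZMod L, p (m j) =
          (∏ j ∈ Finset.univ \ {i, i + q}, p (m j)) * (p (m i) * p (m (i + q))) := by
      intro m
      rw [← Finset.prod_sdiff (Finset.subset_univ {i, i + q}), Finset.prod_pair hiq]
    have hupdi : updN n i q ν i = n i - ν := by simp [updN]
    have hupdq : updN n i q ν (i + q) = n (i + q) + ν := by
      simp [updN, hiq.symm]
    have hprod : ∏ j : Fin d → ZMod L, p (updN n i q ν j) =
        (∏ j ∈ Finset.univ \ {i, i + q}, p (n j)) * (p (n i - ν) * p (n (i + q) + ν)) := by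
      rw [h1 (updN n i q ν), hupdi, hupdq]
      congr 1
      refine Finset.prod_congr rfl fun j hj => ?_
      simp only [Finset.mem_sdiff, Finset.mem_insert, Finset.mem_singleton] at hj
      push_neg at hj
      simp [updN, hj.2.1, hj.2.2]
    have hα1 : α (-q) ν (n (i + q) + ν) = g (-q) ν * p (n (i + q)) / p (n (i + q) + ν) := by
      rw [hform (-q) (hEsym q hqE) ν (n (i + q) + ν) hν1 (Nat.le_add_left ν _),
        Nat.add_sub_cancel]
    have hα2 : α q ν (n i) = g q ν * p (n i - ν) / p (n i) := hform q hqE ν (n i) hν1 hν2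
    rw [hα1, hα2, hprod, h1 n]
    have hpi : p (n i) ≠ 0 := (hp _).ne'
    have hpq : p (n (i + q) + ν) ≠ 0 := (hp _).ne'
    field_simp
  calc
    ∑ i : Fin d → ZMod L, ∑ q ∈ E, ∑ ν ∈ Finset.Icc 1 (n i),
        (α (-q) ν (n (i + q) + ν) * ∏ j : Fin d → ZMod L, p (updN n i q ν j) -
          α q ν (n i) * ∏ j : Fin d → ZMod L, p (n j))
      = ∑ i : Fin d → ZMod L, ∑ q ∈ E, ∑ ν ∈ Finset.Icc 1 (n i),
          (g (-q) ν - g q ν) *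
            (p (n i - ν) / p (n i) * ∏ j : Fin d → ZMod L, p (n j)) := by
        refine Finset.sum_congr rfl fun i _ => Finset.sum_congr rfl fun q hq =>
          Finset.sum_congr rfl fun ν hν => key i q hq ν hν
    _ = ∑ i : Fin d → ZMod L, ∑ ν ∈ Finset.Icc 1 (n i),
          (∑ q ∈ E, (g (-q) ν - g q ν)) *
            (p (n i - ν) / p (n i) * ∏ j : Fin d → ZMod L, p (n j)) := by
        refine Finset.sum_congr rfl fun i _ => ?_
        rw [Finset.sum_comm]
        exact Finset.sum_congr rfl fun ν _ => (Finset.sum_mul _ _ _).symm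
    _ = 0 := by
        refine Finset.sum_eq_zero fun i _ => Finset.sum_eq_zero fun ν _ => ?_
        have hsum : ∑ q ∈ E, g (-q) ν = ∑ q ∈ E, g q ν := by
          refine Finset.sum_nbij' (fun q => -q) (fun q => -q) ?_ ?_ ?_ ?_ ?_
          · intro a ha; exact hEsym a ha
          · intro a ha; exact hEsym a ha
          · intro a _; simp
          · intro a _; simp
          · intro a _; simp
        rw [Finset.sum_sub_distrib, hsum, sub_self, zero_mul]
end

section
/- Consider the generalized zero range process on the torus Λ = (ℤ/Lℤ)^d (d ≥ 1, L ≥ 2) with a nonempty finite symmetric set of directions E ⊆ Λ∖{0}, rates α_q(ν, n) ≥ 0 (q ∈ E, ν ≥ 1, n ≥ 0) with α_q(ν, n) = 0 unless 1 ≤ ν ≤ n, and single-site weights p : ℕ → (0, ∞). Assume: (i) there is ν_max < ∞ with α_q(ν, ·) ≡ 0 for all ν > ν_max; (ii) for every z > 0 the series ∑_{n≥0} z^n p(n) and ∑_{n≥0} z^n α_q(ν, n+ν) p(n+ν) converge for all q ∈ E and 1 ≤ ν ≤ ν_max; (iii) the product measure P(n) = ∏_{i∈Λ} p(n_i) is stationary,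 i.e., for every configuration n : Λ → ℕ, ∑_{i∈Λ} ∑_{q∈E} ∑_{ν=1}^{n_i} [ α_{−q}(ν, n_{i+q} + ν) · P(n^{i,q,ν}) − α_q(ν, n_i) · P(n) ] = 0. Then for each q ∈ E there exists g_q : {1,…,ν_max} → [0, ∞) such that α_q(ν, n) = g_q(ν)·p(n − ν)/p(n) for all 1 ≤ ν ≤ n. -/
open Finset

noncomputable def uMat (p : ℕ → ℝ) (X : ℕ → ℕ → ℝ) (ν : ℕ) : ℕ → ℝ
  | μ => (-(X ν μ) - ∑ k ∈ (Finset.Icc 1 (μ - 1)).attach,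
      p (μ - (k : ℕ)) * uMat p X ν k) / p 0
  decreasing_by
    have := k.2
    simp only [Finset.mem_Icc] at this
    omega

lemma uMat_eq (p : ℕ → ℝ) (X : ℕ → ℕ → ℝ) (ν μ : ℕ) :
    uMat p X ν μ = (-(X ν μ) - ∑ k ∈ Finset.Icc 1 (μ - 1),
      p (μ - k) * uMat p X ν k) / p 0 := by
  rw [uMat]
  congr 1
  rw [← Finset.sum_attach (Finset.Icc 1 (μ-1)) (fun k => p (μ - k) * uMat p X ν k)]

noncomputable def pp (p : ℕ → ℝ) (a ν : ℕ) : ℝ := if ν ≤ a then p (a - ν) else 0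

lemma pp_le (p : ℕ → ℝ) {a ν : ℕ} (h : ν ≤ a) : pp p a ν = p (a - ν) := if_pos h
lemma pp_gt (p : ℕ → ℝ) {a ν : ℕ} (h : ¬ ν ≤ a) : pp p a ν = 0 := if_neg h

section rep

variable (p : ℕ → ℝ) (K : ℕ) (X Y : ℕ → ℕ → ℝ)

lemma sum_conv (hXK : ∀ ν b, K < ν → X ν b = 0) (a b : ℕ) :
    ∑ ν ∈ Icc 1 a, p (a - ν) * X ν b = ∑ ν ∈ Icc 1 K, pp p a ν * X ν b := by
  have h1 : ∑ ν ∈ Icc 1 a, p (a - ν) * X ν b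
      = ∑ ν ∈ Icc 1 (max a K), pp p a ν * X ν b := by
    have e : ∑ ν ∈ Icc 1 a, p (a - ν) * X ν b = ∑ ν ∈ Icc 1 a, pp p a ν * X ν b := by
      apply Finset.sum_congr rfl
      intro ν hν
      simp only [Finset.mem_Icc] at hν
      rw [pp_le p hν.2]
    rw [e]
    apply Finset.sum_subset (Finset.Icc_subset_Icc le_rfl (le_max_left a K))
    intro ν hν hν'
    simp only [Finset.mem_Icc] at hν hν'
    rw [pp_gt p (by omega), zero_mul]
  have h2 : ∑ ν ∈ Icc 1 K, pp p a ν * X ν b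
      = ∑ ν ∈ Icc 1 (max a K), pp p a ν * X ν b := by
    apply Finset.sum_subset (Finset.Icc_subset_Icc le_rfl (le_max_right a K))
    intro ν hν hν'
    simp only [Finset.mem_Icc] at hν hν'
    rw [hXK ν b (by omega), mul_zero]
  rw [h1, ← h2]

lemma rep_aux (hp : ∀ n, 0 < p n)
    (hXK : ∀ ν b, K < ν → X ν b = 0)
    (hFE : ∀ a b : ℕ, ∑ ν ∈ Icc 1 a, p (a - ν) * X ν b
        + ∑ ν ∈ Icc 1 b, p (b - ν) * Y ν a = 0) :
    ∀ μ, 1 ≤ μ → μ ≤ K → ∀ a, Y μ a = ∑ ν ∈ Icc 1 K, uMat p X ν μ * pp p a ν := by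
  intro μ
  induction μ using Nat.strong_induction_on with
  | _ μ IH =>
    intro h1 hK a
    have hFE' := hFE a μ
    have hsplit : ∑ ν ∈ Icc 1 μ, p (μ - ν) * Y ν a
        = (∑ k ∈ Icc 1 (μ - 1), p (μ - k) * Y k a) + p 0 * Y μ a := by
      have h : Icc 1 μ = insert μ (Icc 1 (μ - 1)) := by
        ext k; simp only [Finset.mem_insert, Finset.mem_Icc]; omega
      rw [h, Finset.sum_insert (by simp only [Finset.mem_Icc]; omega), Nat.sub_self]
      ring
    rw [sum_conv p K X hXK, hsplit] at hFE'
    have e1 : ∑ k ∈ Icc 1 (μ - 1), p (μ - k) * Y k a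
        = ∑ k ∈ Icc 1 (μ - 1), ∑ ν ∈ Icc 1 K, p (μ - k) * (uMat p X ν k * pp p a ν) := by
      apply Finset.sum_congr rfl
      intro k hk
      simp only [Finset.mem_Icc] at hk
      rw [IH k (by omega) (by omega) (by omega) a, Finset.mul_sum]
    rw [e1, Finset.sum_comm] at hFE'
    have key : p 0 * Y μ a = ∑ ν ∈ Icc 1 K,
        (-(X ν μ) - ∑ k ∈ Icc 1 (μ - 1), p (μ - k) * uMat p X ν k) * pp p a ν := by
      have e2 : ∑ ν ∈ Icc 1 K,
          (-(X ν μ) - ∑ k ∈ Icc 1 (μ - 1), p (μ - k) * uMat p X ν k) * pp p a ν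
          = ∑ ν ∈ Icc 1 K, (-(pp p a ν * X ν μ)
            - ∑ k ∈ Icc 1 (μ - 1), p (μ - k) * (uMat p X ν k * pp p a ν)) := by
        apply Finset.sum_congr rfl
        intro ν _
        rw [sub_mul, neg_mul, Finset.sum_mul]
        rw [Finset.sum_congr rfl (fun k _ => by ring :
          ∀ k ∈ Icc 1 (μ - 1), p (μ - k) * uMat p X ν k * pp p a ν
            = p (μ - k) * (uMat p X ν k * pp p a ν))]
        ring
      rw [e2, Finset.sum_sub_distrib, Finset.sum_neg_distrib]
      linarith [hFE']
    have hstep : ∑ ν ∈ Icc 1 K, uMat p X ν μ * pp p a ν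
        = (∑ ν ∈ Icc 1 K,
          (-(X ν μ) - ∑ k ∈ Icc 1 (μ - 1), p (μ - k) * uMat p X ν k) * pp p a ν) / p 0 := by
      rw [Finset.sum_div]
      apply Finset.sum_congr rfl
      intro ν _
      rw [uMat_eq]
      ring
    rw [hstep, ← key]
    field_simp [(hp 0).ne']

end rep

section transpose

variable (p : ℕ → ℝ) (K : ℕ) (X Y : ℕ → ℕ → ℝ)

lemma transpose_aux (hp : ∀ n, 0 < p n)
    (hXK : ∀ ν b, K < ν → X ν b = 0) (hYK : ∀ ν a, K < ν → Y ν a = 0)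
    (hFE : ∀ a b : ℕ, ∑ ν ∈ Icc 1 a, p (a - ν) * X ν b
        + ∑ ν ∈ Icc 1 b, p (b - ν) * Y ν a = 0) :
    ∀ μ ν, 1 ≤ μ → μ ≤ K → 1 ≤ ν → ν ≤ K →
      uMat p Y ν μ + uMat p X μ ν = 0 := by
  have hFE2 : ∀ a b : ℕ, ∑ ν ∈ Icc 1 a, p (a - ν) * Y ν b
      + ∑ ν ∈ Icc 1 b, p (b - ν) * X ν a = 0 := by
    intro a b
    have := hFE b a
    linarith
  have repX := rep_aux p K Y X hp hYK hFE2
  have repY := rep_aux p K X Y hp hXK hFE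
  -- the double-sum identity
  have I : ∀ a b : ℕ, ∑ μ' ∈ Icc 1 K, ∑ ν' ∈ Icc 1 K,
      pp p a μ' * pp p b ν' * (uMat p Y ν' μ' + uMat p X μ' ν') = 0 := by
    intro a b
    have h := hFE a b
    rw [sum_conv p K X hXK a b] at h
    have h2 : ∑ ν ∈ Icc 1 b, p (b - ν) * Y ν a = ∑ ν ∈ Icc 1 K, pp p b ν * Y ν a :=
      sum_conv p K Y hYK b a
    rw [h2] at h
    have e1 : ∑ μ' ∈ Icc 1 K, pp p a μ' * X μ' b
        = ∑ μ' ∈ Icc 1 K, ∑ ν' ∈ Icc 1 K, pp p a μ' * pp p b ν' * uMat p Y ν' μ' := by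
      apply Finset.sum_congr rfl
      intro μ' hμ'
      simp only [Finset.mem_Icc] at hμ'
      rw [repX μ' hμ'.1 hμ'.2 b, Finset.mul_sum]
      exact Finset.sum_congr rfl fun ν' _ => by ring
    have e2 : ∑ ν' ∈ Icc 1 K, pp p b ν' * Y ν' a
        = ∑ μ' ∈ Icc 1 K, ∑ ν' ∈ Icc 1 K, pp p a μ' * pp p b ν' * uMat p X μ' ν' := by
      rw [Finset.sum_comm]
      apply Finset.sum_congr rfl
      intro ν' hν'
      simp only [Finset.mem_Icc] at hν'
      rw [repY ν' hν'.1 hν'.2 a, Finset.mul_sum]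
      exact Finset.sum_congr rfl fun μ' _ => by ring
    rw [e1, e2] at h
    rw [← Finset.sum_add_distrib] at h
    rw [← h]
    apply Finset.sum_congr rfl
    intro μ' _
    rw [← Finset.sum_add_distrib]
    exact Finset.sum_congr rfl fun ν' _ => by ring
  intro μ ν h1 h2 h3 h4
  have key : ∀ s : ℕ, ∀ μ ν, μ + ν = s → 1 ≤ μ → μ ≤ K → 1 ≤ ν → ν ≤ K →
      uMat p Y ν μ + uMat p X μ ν = 0 := by
    intro s
    induction s using Nat.strong_induction_on with
    | _ s IH =>
      intro μ ν hs h1 h2 h3 h4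
      have hI := I μ ν
      rw [Finset.sum_eq_single_of_mem μ (by simp only [Finset.mem_Icc]; omega)] at hI
      · rw [Finset.sum_eq_single_of_mem ν (by simp only [Finset.mem_Icc]; omega)] at hI
        · rw [pp_le p (le_refl μ), pp_le p (le_refl ν)] at hI
          simp only [Nat.sub_self] at hI
          have hpos : 0 < p 0 * p 0 := mul_pos (hp 0) (hp 0)
          have := mul_eq_zero.mp hI
          rcases this with h | h
          · exact absurd h hpos.ne'
          · exact h
        · intro ν' hν' hne
          simp only [Finset.mem_Icc] at hν'
          rcases lt_or_gt_of_ne hne with hlt | hgt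
          · rw [IH (μ + ν') (by omega) μ ν' rfl h1 h2 hν'.1 hν'.2, mul_zero]
          · rw [pp_gt p (a := ν) (ν := ν') (by omega), mul_zero, zero_mul]
      · intro μ' hμ' hne
        simp only [Finset.mem_Icc] at hμ'
        apply Finset.sum_eq_zero
        intro ν' hν'
        simp only [Finset.mem_Icc] at hν'
        rcases lt_or_gt_of_ne hne with hlt | hgt
        · rcases le_or_gt ν' ν with hle | hgt2
          · rw [IH (μ' + ν') (by omega) μ' ν' rfl hμ'.1 hμ'.2 hν'.1 hν'.2, mul_zero]
          · rw [pp_gt p (a := ν) (ν := ν') (by omega), mul_zero, zero_mul]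
        · rw [pp_gt p (a := μ) (ν := μ') (by omega), zero_mul, zero_mul]
  exact key (μ + ν) μ ν rfl h1 h2 h3 h4

end transpose

section analytic

variable (p : ℕ → ℝ) (K : ℕ)

lemma pp_summable {z : ℝ} (hz : 0 < z) (hZ : Summable (fun n => z ^ n * p n)) (ν : ℕ) :
    Summable (fun a => z ^ a * pp p a ν) ∧
      ∑' a, z ^ a * pp p a ν = z ^ ν * ∑' n, z ^ n * p n := by
  have hshift : (fun n => z ^ (n + ν) * pp p (n + ν) ν) = fun n => z ^ ν * (z ^ n * p n) := by
    funext n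
    rw [pp_le p (Nat.le_add_left ν n), Nat.add_sub_cancel, pow_add]
    ring
  have hS : Summable (fun n => z ^ (n + ν) * pp p (n + ν) ν) := by
    rw [hshift]; exact hZ.mul_left _
  have hsum : Summable (fun a => z ^ a * pp p a ν) := by
    rw [← summable_nat_add_iff ν]; exact hS
  constructor
  · exact hsum
  · have := Summable.sum_add_tsum_nat_add ν hsum
    have hzero : ∑ i ∈ range ν, z ^ i * pp p i ν = 0 := by
      apply Finset.sum_eq_zero
      intro i hi
      simp only [Finset.mem_range] at hi
      rw [pp_gt p (by omega), mul_zero]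
    rw [hzero, zero_add] at this
    rw [← this, hshift, tsum_mul_left]

lemma row_bound (hp : ∀ n, 0 < p n) (f : ℕ → ℝ) (c : ℝ) (u : ℕ → ℝ)
    (hrep : ∀ a, f a = ∑ ν ∈ Icc 1 K, u ν * pp p a ν)
    (hpos : ∀ a, 0 ≤ f a + c * p a)
    (hZsum : ∀ z : ℝ, 0 < z → Summable (fun n => z ^ n * p n))
    (hfsum : ∀ z : ℝ, 0 < z → Summable (fun a => z ^ a * (f a + c * p a))) :
    ∀ z : ℝ, 0 < z → -c ≤ ∑ ν ∈ Icc 1 K, u ν * z ^ ν := by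
  intro z hz
  have hZ := hZsum z hz
  set Z : ℝ := ∑' n, z ^ n * p n with hZdef
  have hZpos : 0 < Z := by
    have h0 : z ^ 0 * p 0 ≤ Z := Summable.le_tsum hZ 0 fun j _ =>
      mul_nonneg (pow_nonneg hz.le j) (hp j).le
    have := hp 0
    simp only [pow_zero, one_mul] at h0
    linarith
  have hppS := fun ν => pp_summable p hz hZ ν
  have hfS : Summable (fun a => z ^ a * f a) := by
    have : (fun a => z ^ a * f a) = fun a => ∑ ν ∈ Icc 1 K, u ν * (z ^ a * pp p a ν) := by
      funext a
      rw [hrep a, Finset.mul_sum]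
      exact Finset.sum_congr rfl fun ν _ => by ring
    rw [this]
    exact summable_sum fun ν _ => ((hppS ν).1).mul_left (u ν)
  have hT : ∑' a, z ^ a * f a = (∑ ν ∈ Icc 1 K, u ν * z ^ ν) * Z := by
    have e : (fun a => z ^ a * f a) = fun a => ∑ ν ∈ Icc 1 K, u ν * (z ^ a * pp p a ν) := by
      funext a
      rw [hrep a, Finset.mul_sum]
      exact Finset.sum_congr rfl fun ν _ => by ring
    rw [e, Summable.tsum_finsetSum (fun ν _ => ((hppS ν).1).mul_left (u ν))]
    rw [Finset.sum_mul]
    apply Finset.sum_congr rfl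
    intro ν _
    rw [tsum_mul_left, (hppS ν).2]
    ring
  have hsplit : (fun a => z ^ a * (f a + c * p a))
      = fun a => z ^ a * f a + c * (z ^ a * p a) := by
    funext a; ring
  have htot : ∑' a, z ^ a * (f a + c * p a)
      = (∑ ν ∈ Icc 1 K, u ν * z ^ ν) * Z + c * Z := by
    rw [hsplit, Summable.tsum_add hfS (hZ.mul_left c), hT, tsum_mul_left]
  have hnn : 0 ≤ ∑' a, z ^ a * (f a + c * p a) :=
    tsum_nonneg fun a => mul_nonneg (pow_nonneg hz.le a) (hpos a)
  rw [htot] at hnn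
  nlinarith [hZpos]

lemma poly_pos (c : ℕ → ℝ) (C : ℝ) (hC : 0 ≤ C)
    (h : ∀ z : ℝ, 0 < z → -C ≤ ∑ ν ∈ Icc 1 K, c ν * z ^ ν)
    (m : ℕ) (hm1 : 1 ≤ m) (hmK : m ≤ K)
    (htop : ∀ ν, ν ∈ Icc 1 K → m < ν → c ν = 0)
    (hne : c m ≠ 0) : 0 < c m := by
  rcases lt_trichotomy (c m) 0 with hneg | hzero | hpos
  · exfalso
    set B : ℝ := ∑ ν ∈ Icc 1 K, |c ν| with hBdef
    have hB : 0 ≤ B := Finset.sum_nonneg fun ν _ => abs_nonneg _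
    set z : ℝ := max 1 ((B + C + 1) / (-c m)) with hzdef
    have hz1 : (1:ℝ) ≤ z := le_max_left _ _
    have hz : (0:ℝ) < z := lt_of_lt_of_le one_pos hz1
    have hcm : (0:ℝ) < -c m := by linarith
    have hz2 : B + C + 1 ≤ (-c m) * z := by
      have : (B + C + 1) / (-c m) ≤ z := le_max_right _ _
      calc B + C + 1 = ((B + C + 1) / (-c m)) * (-c m) := by field_simp
        _ ≤ z * (-c m) := by
            apply mul_le_mul_of_nonneg_right this hcm.le
        _ = (-c m) * z := by ring
    have hsplit : Icc 1 K = insert m ((Icc 1 K).erase m) :=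
      (Finset.insert_erase (by simp only [Finset.mem_Icc]; omega)).symm
    have hbound : ∑ ν ∈ Icc 1 K, c ν * z ^ ν ≤ c m * z ^ m + B * z ^ (m - 1) := by
      rw [hsplit, Finset.sum_insert (Finset.notMem_erase m _)]
      have herase : ∑ ν ∈ (Icc 1 K).erase m, c ν * z ^ ν
          ≤ ∑ ν ∈ (Icc 1 K).erase m, |c ν| * z ^ (m - 1) := by
        apply Finset.sum_le_sum
        intro ν hν
        have hνm := Finset.ne_of_mem_erase hν
        have hν' := Finset.mem_of_mem_erase hν
        simp only [Finset.mem_Icc] at hν'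
        rcases lt_or_gt_of_ne hνm with hlt | hgt
        · calc c ν * z ^ ν ≤ |c ν| * z ^ ν := by
                apply mul_le_mul_of_nonneg_right (le_abs_self _) (pow_nonneg hz.le ν)
            _ ≤ |c ν| * z ^ (m - 1) := by
                apply mul_le_mul_of_nonneg_left _ (abs_nonneg _)
                exact pow_le_pow_right₀ hz1 (by omega)
        · rw [htop ν (by simp only [Finset.mem_Icc]; omega) hgt]
          simp
      calc c m * z ^ m + ∑ ν ∈ (Icc 1 K).erase m, c ν * z ^ ν
          ≤ c m * z ^ m + ∑ ν ∈ (Icc 1 K).erase m, |c ν| * z ^ (m - 1) := by linarith [herase]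
        _ ≤ c m * z ^ m + B * z ^ (m - 1) := by
            rw [← Finset.sum_mul]
            have : ∑ ν ∈ (Icc 1 K).erase m, |c ν| ≤ B := by
              rw [hBdef]
              exact Finset.sum_le_sum_of_subset_of_nonneg (Finset.erase_subset _ _)
                (fun i _ _ => abs_nonneg _)
            apply add_le_add_right
            apply mul_le_mul_of_nonneg_right this (pow_nonneg hz.le _)
    have hm' : m - 1 + 1 = m := by omega
    have hpow : z ^ m = z ^ (m - 1) * z := by
      rw [← pow_succ, hm']
    have hfinal : c m * z ^ m + B * z ^ (m - 1) ≤ -(C + 1) := by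
      rw [hpow]
      have : c m * (z ^ (m-1) * z) + B * z ^ (m-1) = z ^ (m-1) * (c m * z + B) := by ring
      rw [this]
      have h1 : c m * z + B ≤ -(C + 1) := by nlinarith [hz2]
      have h2 : (1:ℝ) ≤ z ^ (m - 1) := one_le_pow₀ hz1
      nlinarith [h1, h2, hC]
    have := h z hz
    linarith
  · exact absurd hzero hne
  · exact hpos

end analytic

lemma core (p : ℕ → ℝ) (hp : ∀ n, 0 < p n) (K : ℕ) (X Y : ℕ → ℕ → ℝ)
    (cX cY : ℕ → ℝ) (hcX : ∀ ν, 0 ≤ cX ν) (hcY : ∀ ν, 0 ≤ cY ν)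
    (hXK : ∀ ν b, K < ν → X ν b = 0) (hYK : ∀ ν a, K < ν → Y ν a = 0)
    (hXpos : ∀ ν, 1 ≤ ν → ν ≤ K → ∀ b, 0 ≤ X ν b + cX ν * p b)
    (hYpos : ∀ ν, 1 ≤ ν → ν ≤ K → ∀ a, 0 ≤ Y ν a + cY ν * p a)
    (hZsum : ∀ z : ℝ, 0 < z → Summable (fun n => z ^ n * p n))
    (hXsum : ∀ ν, 1 ≤ ν → ν ≤ K → ∀ z : ℝ, 0 < z →
      Summable (fun b => z ^ b * (X ν b + cX ν * p b)))
    (hYsum : ∀ ν, 1 ≤ ν → ν ≤ K → ∀ z : ℝ, 0 < z →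
      Summable (fun a => z ^ a * (Y ν a + cY ν * p a)))
    (hFE : ∀ a b : ℕ, ∑ ν ∈ Icc 1 a, p (a - ν) * X ν b
        + ∑ ν ∈ Icc 1 b, p (b - ν) * Y ν a = 0) :
    ∀ ν, 1 ≤ ν → ν ≤ K → ∀ a, Y ν a = 0 := by
  have hFE2 : ∀ a b : ℕ, ∑ ν ∈ Icc 1 a, p (a - ν) * Y ν b
      + ∑ ν ∈ Icc 1 b, p (b - ν) * X ν a = 0 := by
    intro a b
    have := hFE b a
    linarith
  have repY := rep_aux p K X Y hp hXK hFE
  have repX := rep_aux p K Y X hp hYK hFE2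
  have trans := transpose_aux p K X Y hp hXK hYK hFE
  -- row bounds
  have rowY : ∀ μ, 1 ≤ μ → μ ≤ K → ∀ z : ℝ, 0 < z →
      -(cY μ) ≤ ∑ ν ∈ Icc 1 K, uMat p X ν μ * z ^ ν := by
    intro μ h1 h2
    exact row_bound p K hp (Y μ) (cY μ) (fun ν => uMat p X ν μ)
      (repY μ h1 h2) (hYpos μ h1 h2) hZsum (hYsum μ h1 h2)
  have rowX : ∀ μ, 1 ≤ μ → μ ≤ K → ∀ z : ℝ, 0 < z →
      -(cX μ) ≤ ∑ ν ∈ Icc 1 K, uMat p Y ν μ * z ^ ν := by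
    intro μ h1 h2
    exact row_bound p K hp (X μ) (cX μ) (fun ν => uMat p Y ν μ)
      (repX μ h1 h2) (hXpos μ h1 h2) hZsum (hXsum μ h1 h2)
  -- all coefficients vanish
  have uzero : ∀ μ ν, 1 ≤ μ → μ ≤ K → 1 ≤ ν → ν ≤ K → uMat p X ν μ = 0 := by
    by_contra hcon
    push_neg at hcon
    obtain ⟨μ₁, ν₁, hμ1, hμK, hν1, hνK, hne⟩ := hcon
    set S : Finset (ℕ × ℕ) := (Icc 1 K ×ˢ Icc 1 K).filter
      (fun x => uMat p X x.2 x.1 ≠ 0) with hSdef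
    have hSne : S.Nonempty := ⟨(μ₁, ν₁), by
      simp only [hSdef, Finset.mem_filter, Finset.mem_product, Finset.mem_Icc]
      exact ⟨⟨⟨hμ1, hμK⟩, ⟨hν1, hνK⟩⟩, hne⟩⟩
    obtain ⟨⟨μ, ν⟩, hmem, hmax⟩ := S.exists_max_image (fun x => x.1 + x.2) hSne
    simp only [hSdef, Finset.mem_filter, Finset.mem_product, Finset.mem_Icc] at hmem
    obtain ⟨⟨⟨hμ1', hμK'⟩, hν1', hνK'⟩, hune⟩ := hmem
    -- row positivity: uMat p X ν μ > 0
    have hrowpos : 0 < uMat p X ν μ := by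
      apply poly_pos K (fun ν' => uMat p X ν' μ) (cY μ) (hcY μ) (rowY μ hμ1' hμK')
        ν hν1' hνK' _ hune
      intro ν' hν' hgt
      simp only [Finset.mem_Icc] at hν'
      by_contra hne'
      have hmm : (μ, ν') ∈ S := by
        simp only [hSdef, Finset.mem_filter, Finset.mem_product, Finset.mem_Icc]
        exact ⟨⟨⟨hμ1', hμK'⟩, hν'⟩, hne'⟩
      have := hmax (μ, ν') hmm
      simp only at this
      omega
    -- column positivity: uMat p Y μ ν > 0, i.e. - uMat p X ν μ > 0
    have hcolpos : 0 < uMat p Y μ ν := by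
      apply poly_pos K (fun ρ => uMat p Y ρ ν) (cX ν) (hcX ν) (rowX ν hν1' hνK')
        μ hμ1' hμK' _ (by
          intro h0
          have h0' : uMat p Y μ ν = 0 := h0
          have := trans ν μ hν1' hνK' hμ1' hμK'
          rw [h0'] at this
          exact hune (by linarith))
      intro ρ hρ hgt
      simp only [Finset.mem_Icc] at hρ
      have htr := trans ν ρ hν1' hνK' hρ.1 hρ.2
      have hXzero : uMat p X ν ρ = 0 := by
        by_contra hne'
        have hmm : (ρ, ν) ∈ S := by
          simp only [hSdef, Finset.mem_filter, Finset.mem_product, Finset.mem_Icc]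
          exact ⟨⟨hρ, ⟨hν1', hνK'⟩⟩, hne'⟩
        have := hmax (ρ, ν) hmm
        simp only at this
        omega
      linarith [htr]
    have htr := trans ν μ hν1' hνK' hμ1' hμK'
    linarith
  intro ν h1 h2 a
  rw [repY ν h1 h2 a]
  apply Finset.sum_eq_zero
  intro ν' hν'
  simp only [Finset.mem_Icc] at hν'
  rw [uzero ν ν' h1 h2 hν'.1 hν'.2, zero_mul]


open Finset

def cfg {ι : Type*} [DecidableEq ι] (s t : ι) (a b : ℕ) : ι → ℕ :=
  fun j => if j = s then a else if j = t then b else 0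

lemma cfg_fst {ι : Type*} [DecidableEq ι] (s t : ι) (a b : ℕ) : cfg s t a b s = a :=
  if_pos rfl

lemma cfg_snd {ι : Type*} [DecidableEq ι] {s t : ι} (h : t ≠ s) (a b : ℕ) :
    cfg s t a b t = b := by
  rw [cfg, if_neg h, if_pos rfl]

lemma cfg_other {ι : Type*} [DecidableEq ι] {s t j : ι} (h1 : j ≠ s) (h2 : j ≠ t)
    (a b : ℕ) : cfg s t a b j = 0 := by
  rw [cfg, if_neg h1, if_neg h2]

lemma prod_update_mul {ι : Type*} [Fintype ι] [DecidableEq ι] (p : ℕ → ℝ)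
    (c : ι → ℕ) (s : ι) (x : ℕ) :
    (∏ j, p (Function.update c s x j)) * p (c s) = (∏ j, p (c j)) * p x := by
  have h : ∀ j, p (Function.update c s x j)
      = Function.update (fun k => p (c k)) s (p x) j := fun j =>
    Function.apply_update (fun _ n => p n) c s x j
  rw [Finset.prod_congr rfl fun j _ => h j]
  rw [Finset.prod_update_of_mem (Finset.mem_univ s)]
  rw [← Finset.mul_prod_erase univ (fun j => p (c j)) (Finset.mem_univ s),
    ← Finset.sdiff_singleton_eq_erase]
  ring

lemma Qkey {ι : Type*} [Fintype ι] [DecidableEq ι] (p : ℕ → ℝ)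
    (c : ι → ℕ) {s t : ι} (hst : s ≠ t) (x y : ℕ) :
    (∏ j, p (Function.update (Function.update c s x) t y j)) * (p (c t) * p (c s))
      = (∏ j, p (c j)) * (p x * p y) := by
  have h1 := prod_update_mul p (Function.update c s x) t y
  rw [Function.update_of_ne (Ne.symm hst)] at h1
  have h2 := prod_update_mul p c s x
  linear_combination (p (c s)) * h1 + (p y) * h2

lemma updN_eq {d L : ℕ} (n : (Fin d → ZMod L) → ℕ) (i q : Fin d → ZMod L)
    (hq : i ≠ i + q) (ν : ℕ) :
    updN n i q ν = Function.update (Function.update n i (n i - ν)) (i + q)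
      (n (i + q) + ν) := by
  funext j
  by_cases h1 : j = i + q
  · subst h1
    rw [Function.update_self, updN, if_neg (fun h => hq h.symm), if_pos rfl]
  · rw [Function.update_of_ne h1]
    by_cases h2 : j = i
    · subst h2
      rw [Function.update_self, updN, if_pos rfl]
    · rw [Function.update_of_ne h2, updN, if_neg h2, if_neg h1]

lemma Qmove {d L : ℕ} [NeZero L] (p : ℕ → ℝ) (n : (Fin d → ZMod L) → ℕ)
    (i q : Fin d → ZMod L) (hq : q ≠ 0) (ν : ℕ) :
    (∏ j, p (updN n i q ν j)) * (p (n (i + q)) * p (n i))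
      = (∏ j, p (n j)) * (p (n i - ν) * p (n (i + q) + ν)) := by
  have hiq : i ≠ i + q := by
    intro h
    apply hq
    have := h.symm
    rwa [add_eq_left] at this
  rw [updN_eq n i q hiq ν]
  exact Qkey p n hiq (n i - ν) (n (i + q) + ν)

lemma sum_two {ι : Type*} [Fintype ι] [DecidableEq ι] (F : ι → ℝ) (s t : ι) (hst : s ≠ t)
    (h : ∀ i, i ≠ s → i ≠ t → F i = 0) : ∑ i, F i = F s + F t := by
  rw [← Finset.sum_pair hst]
  symm
  apply Finset.sum_subset (Finset.subset_univ _)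
  intro i _ hi
  simp only [Finset.mem_insert, Finset.mem_singleton] at hi
  push_neg at hi
  exact h i hi.1 hi.2


/-- Necessity for the generalized zero range process: if the number of particles moved per
transition is bounded by `ν_max`, the relevant generating series converge, and the product
measure `P(n) = ∏_i p(n_i)` is stationary, then the rates have the product form
`α_q(ν,n) = g_q(ν) p(n−ν)/p(n)`. -/
theorem gzrp_product_measure_necessary (d L : ℕ) (hd : 1 ≤ d) (hL : 2 ≤ L) [NeZero L]
    (E : Finset (Fin d → ZMod L)) (hEne : E.Nonempty)
    (hE0 : (0 : Fin d → ZMod L) ∉ E) (hEsym : ∀ q ∈ E, -q ∈ E)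
    (α : (Fin d → ZMod L) → ℕ → ℕ → ℝ)
    (hαnn : ∀ q ν n, 0 ≤ α q ν n)
    (hαzero : ∀ q ν n, ¬(1 ≤ ν ∧ ν ≤ n) → α q ν n = 0)
    (p : ℕ → ℝ) (hp : ∀ n, 0 < p n)
    (νmax : ℕ)
    (hνmax : ∀ q (ν n : ℕ), νmax < ν → α q ν n = 0)
    (hsum : ∀ z : ℝ, 0 < z →
      Summable (fun n : ℕ => z ^ n * p n) ∧
      ∀ q ∈ E, ∀ ν : ℕ, 1 ≤ ν → ν ≤ νmax →
        Summable (fun n : ℕ => z ^ n * α q ν (n + ν) * p (n + ν)))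
    (hstat : ∀ n : (Fin d → ZMod L) → ℕ,
      ∑ i : Fin d → ZMod L, ∑ q ∈ E, ∑ ν ∈ Finset.Icc 1 (n i),
        (α (-q) ν (n (i + q) + ν) * ∏ j : Fin d → ZMod L, p (updN n i q ν j) -
          α q ν (n i) * ∏ j : Fin d → ZMod L, p (n j)) = 0) :
    ∀ q ∈ E, ∃ g : ℕ → ℝ,
      (∀ ν : ℕ, 1 ≤ ν → ν ≤ νmax → 0 ≤ g ν) ∧
      ∀ ν n : ℕ, 1 ≤ ν → ν ≤ n → α q ν n = g ν * p (n - ν) / p n := by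
  intro q0 hq0E
  have hq0ne : q0 ≠ (0 : Fin d → ZMod L) := fun h => hE0 (h ▸ hq0E)
  have hnq0E : -q0 ∈ E := hEsym q0 hq0E
  have hEne0 : ∀ q ∈ E, q ≠ (0 : Fin d → ZMod L) := fun q hq h => hE0 (h ▸ hq)
  have h0q0 : (0 : Fin d → ZMod L) ≠ q0 := Ne.symm hq0ne
  -- Step 1: the two-site equation
  have he2 : ∀ a b : ℕ,
      (∑ ν ∈ Icc 1 a, (α (-q0) ν (b + ν) * (p (a - ν) * p (b + ν) * p 0)
          - α q0 ν a * (p a * p b * p 0)))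
      + (∑ q ∈ E.erase q0, ∑ ν ∈ Icc 1 a, (α (-q) ν ν * (p (a - ν) * p ν * p b)
          - α q ν a * (p a * p b * p 0)))
      + ((∑ ν ∈ Icc 1 b, (α q0 ν (a + ν) * (p (a + ν) * p (b - ν) * p 0)
          - α (-q0) ν b * (p a * p b * p 0)))
      + (∑ q ∈ E.erase (-q0), ∑ ν ∈ Icc 1 b, (α (-q) ν ν * (p (b - ν) * p ν * p a)
          - α q ν b * (p a * p b * p 0)))) = 0 := by
    intro a b
    set n : (Fin d → ZMod L) → ℕ := cfg 0 q0 a b with hndef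
    have hn0 : n 0 = a := cfg_fst 0 q0 a b
    have hnq0 : n q0 = b := cfg_snd hq0ne a b
    have hQpos : (0:ℝ) < ∏ j, p (n j) := Finset.prod_pos fun j _ => hp _
    have hs := hstat n
    rw [sum_two _ 0 q0 h0q0 (by
      intro i hi1 hi2
      have hni : n i = 0 := cfg_other hi1 hi2 a b
      rw [hni, show Finset.Icc 1 0 = (∅ : Finset ℕ) from Finset.Icc_eq_empty (by omega)]
      simp)] at hs
    rw [hn0, hnq0] at hs
    -- part at site 0
    have part0 : (p a * p b * p 0) * (∑ q ∈ E, ∑ ν ∈ Icc 1 a,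
        (α (-q) ν (n (0 + q) + ν) * ∏ j, p (updN n 0 q ν j)
          - α q ν a * ∏ j, p (n j)))
        = (∏ j, p (n j)) *
          ((∑ ν ∈ Icc 1 a, (α (-q0) ν (b + ν) * (p (a - ν) * p (b + ν) * p 0)
              - α q0 ν a * (p a * p b * p 0)))
          + (∑ q ∈ E.erase q0, ∑ ν ∈ Icc 1 a, (α (-q) ν ν * (p (a - ν) * p ν * p b)
              - α q ν a * (p a * p b * p 0)))) := by
      rw [← Finset.add_sum_erase E _ hq0E, mul_add, mul_add]
      congr 1
      · rw [zero_add, hnq0, Finset.mul_sum, Finset.mul_sum]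
        apply Finset.sum_congr rfl
        intro ν _
        have hk := Qmove p n 0 q0 hq0ne ν
        rw [zero_add, hn0, hnq0] at hk
        linear_combination (α (-q0) ν (b + ν) * p 0) * hk
      · rw [Finset.mul_sum, Finset.mul_sum]
        apply Finset.sum_congr rfl
        intro q hq
        have hqE := Finset.mem_of_mem_erase hq
        have hqne0 : q ≠ 0 := hEne0 q hqE
        have hqneq0 : q ≠ q0 := Finset.ne_of_mem_erase hq
        have hnq : n q = 0 := cfg_other hqne0 hqneq0 a b
        rw [zero_add, hnq, Finset.mul_sum, Finset.mul_sum]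
        apply Finset.sum_congr rfl
        intro ν _
        have hk := Qmove p n 0 q hqne0 ν
        rw [zero_add, hn0, hnq] at hk
        rw [Nat.zero_add] at hk
        simp only [Nat.zero_add]
        linear_combination (α (-q) ν ν * p b) * hk
    -- part at site q0
    have partq0 : (p a * p b * p 0) * (∑ q ∈ E, ∑ ν ∈ Icc 1 b,
        (α (-q) ν (n (q0 + q) + ν) * ∏ j, p (updN n q0 q ν j)
          - α q ν b * ∏ j, p (n j)))
        = (∏ j, p (n j)) *
          ((∑ ν ∈ Icc 1 b, (α q0 ν (a + ν) * (p (a + ν) * p (b - ν) * p 0)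
              - α (-q0) ν b * (p a * p b * p 0)))
          + (∑ q ∈ E.erase (-q0), ∑ ν ∈ Icc 1 b, (α (-q) ν ν * (p (b - ν) * p ν * p a)
              - α q ν b * (p a * p b * p 0)))) := by
      rw [← Finset.add_sum_erase E _ hnq0E, mul_add, mul_add]
      congr 1
      · rw [show q0 + -q0 = (0 : Fin d → ZMod L) from add_neg_cancel q0, hn0, neg_neg,
          Finset.mul_sum, Finset.mul_sum]
        apply Finset.sum_congr rfl
        intro ν _
        have hk := Qmove p n q0 (-q0) (neg_ne_zero.mpr hq0ne) ν
        rw [show q0 + -q0 = (0 : Fin d → ZMod L) from add_neg_cancel q0, hn0, hnq0] at hk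
        linear_combination (α q0 ν (a + ν) * p 0) * hk
      · rw [Finset.mul_sum, Finset.mul_sum]
        apply Finset.sum_congr rfl
        intro q hq
        have hqE := Finset.mem_of_mem_erase hq
        have hqne0 : q ≠ 0 := hEne0 q hqE
        have hqnenq0 : q ≠ -q0 := Finset.ne_of_mem_erase hq
        have hs0 : q0 + q ≠ 0 := by
          intro h
          exact hqnenq0 (by rw [← neg_eq_of_add_eq_zero_right h])
        have hsq0 : q0 + q ≠ q0 := by
          intro h
          exact hqne0 (by rwa [add_eq_left] at h)
        have hnq : n (q0 + q) = 0 := cfg_other hs0 hsq0 a b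
        rw [hnq, Finset.mul_sum, Finset.mul_sum]
        apply Finset.sum_congr rfl
        intro ν _
        have hk := Qmove p n q0 q hqne0 ν
        rw [hnq0, hnq, Nat.zero_add] at hk
        simp only [Nat.zero_add]
        linear_combination (α (-q) ν ν * p a) * hk
    have hzero : (∏ j, p (n j)) *
        ((∑ ν ∈ Icc 1 a, (α (-q0) ν (b + ν) * (p (a - ν) * p (b + ν) * p 0)
            - α q0 ν a * (p a * p b * p 0)))
        + (∑ q ∈ E.erase q0, ∑ ν ∈ Icc 1 a, (α (-q) ν ν * (p (a - ν) * p ν * p b)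
            - α q ν a * (p a * p b * p 0)))
        + ((∑ ν ∈ Icc 1 b, (α q0 ν (a + ν) * (p (a + ν) * p (b - ν) * p 0)
            - α (-q0) ν b * (p a * p b * p 0)))
        + (∑ q ∈ E.erase (-q0), ∑ ν ∈ Icc 1 b, (α (-q) ν ν * (p (b - ν) * p ν * p a)
            - α q ν b * (p a * p b * p 0))))) = 0 := by
      linear_combination (p a * p b * p 0) * hs - part0 - partq0
    exact (mul_eq_zero.mp hzero).resolve_left hQpos.ne'
  -- Step 2: the functional equation
  set XF : ℕ → ℕ → ℝ := fun ν b =>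
    α (-q0) ν (b + ν) * (p (b + ν) * p 0) - α (-q0) ν ν * (p ν * p b) with hXF
  set YF : ℕ → ℕ → ℝ := fun ν a =>
    α q0 ν (a + ν) * (p (a + ν) * p 0) - α q0 ν ν * (p ν * p a) with hYF
  have hIcc0 : Finset.Icc 1 0 = (∅ : Finset ℕ) := Finset.Icc_eq_empty (by omega)
  have hFE : ∀ a b : ℕ, ∑ ν ∈ Icc 1 a, p (a - ν) * XF ν b
      + ∑ ν ∈ Icc 1 b, p (b - ν) * YF ν a = 0 := by
    intro a b
    have h1 := he2 a b
    have h2 := he2 a 0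
    have h3 := he2 0 b
    rw [hIcc0] at h2 h3
    simp only [Finset.sum_empty, Nat.zero_add, Finset.sum_const_zero, add_zero, zero_add] at h2 h3
    have e1 : p 0 * (∑ ν ∈ Icc 1 a, p (a - ν) * XF ν b)
        = p 0 * (∑ ν ∈ Icc 1 a, (α (-q0) ν (b + ν) * (p (a - ν) * p (b + ν) * p 0)
            - α q0 ν a * (p a * p b * p 0)))
          - p b * (∑ ν ∈ Icc 1 a, (α (-q0) ν ν * (p (a - ν) * p ν * p 0)
            - α q0 ν a * (p a * p 0 * p 0))) := by
      rw [Finset.mul_sum, Finset.mul_sum, Finset.mul_sum, ← Finset.sum_sub_distrib]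
      apply Finset.sum_congr rfl
      intro ν _
      simp only [hXF]
      ring
    have e3 : p 0 * (∑ ν ∈ Icc 1 b, p (b - ν) * YF ν a)
        = p 0 * (∑ ν ∈ Icc 1 b, (α q0 ν (a + ν) * (p (a + ν) * p (b - ν) * p 0)
            - α (-q0) ν b * (p a * p b * p 0)))
          - p a * (∑ ν ∈ Icc 1 b, (α q0 ν ν * (p ν * p (b - ν) * p 0)
            - α (-q0) ν b * (p 0 * p b * p 0))) := by
      rw [Finset.mul_sum, Finset.mul_sum, Finset.mul_sum, ← Finset.sum_sub_distrib]
      apply Finset.sum_congr rfl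
      intro ν _
      simp only [hYF]
      ring
    have e2 : p 0 * (∑ q ∈ E.erase q0, ∑ ν ∈ Icc 1 a,
          (α (-q) ν ν * (p (a - ν) * p ν * p b) - α q ν a * (p a * p b * p 0)))
        = p b * (∑ q ∈ E.erase q0, ∑ ν ∈ Icc 1 a,
          (α (-q) ν ν * (p (a - ν) * p ν * p 0) - α q ν a * (p a * p 0 * p 0))) := by
      rw [Finset.mul_sum, Finset.mul_sum]
      apply Finset.sum_congr rfl
      intro q _
      rw [Finset.mul_sum, Finset.mul_sum]
      exact Finset.sum_congr rfl fun ν _ => by ring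
    have e4 : p 0 * (∑ q ∈ E.erase (-q0), ∑ ν ∈ Icc 1 b,
          (α (-q) ν ν * (p (b - ν) * p ν * p a) - α q ν b * (p a * p b * p 0)))
        = p a * (∑ q ∈ E.erase (-q0), ∑ ν ∈ Icc 1 b,
          (α (-q) ν ν * (p (b - ν) * p ν * p 0) - α q ν b * (p 0 * p b * p 0))) := by
      rw [Finset.mul_sum, Finset.mul_sum]
      apply Finset.sum_congr rfl
      intro q _
      rw [Finset.mul_sum, Finset.mul_sum]
      exact Finset.sum_congr rfl fun ν _ => by ring
    have hmain : p 0 * (∑ ν ∈ Icc 1 a, p (a - ν) * XF ν b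
        + ∑ ν ∈ Icc 1 b, p (b - ν) * YF ν a) = 0 := by
      linear_combination e1 + e3 + (p 0) * h1 - (p b) * h2 - (p a) * h3 - e2 - e4
    have := mul_eq_zero.mp hmain
    rcases this with h | h
    · exact absurd h (hp 0).ne'
    · exact h
  -- Step 3: apply the core lemma
  have hYzero : ∀ ν, 1 ≤ ν → ν ≤ νmax → ∀ a, YF ν a = 0 := by
    apply core p hp νmax XF YF
      (fun ν => α (-q0) ν ν * p ν) (fun ν => α q0 ν ν * p ν)
      (fun ν => mul_nonneg (hαnn _ _ _) (hp ν).le)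
      (fun ν => mul_nonneg (hαnn _ _ _) (hp ν).le)
    · intro ν b hν
      simp only [hXF]
      rw [hνmax _ _ _ hν, hνmax _ _ _ hν]
      ring
    · intro ν a hν
      simp only [hYF]
      rw [hνmax _ _ _ hν, hνmax _ _ _ hν]
      ring
    · intro ν h1 h2 b
      have : XF ν b + α (-q0) ν ν * p ν * p b = α (-q0) ν (b + ν) * p (b + ν) * p 0 := by
        simp only [hXF]; ring
      rw [this]
      exact mul_nonneg (mul_nonneg (hαnn _ _ _) (hp _).le) (hp 0).le
    · intro ν h1 h2 a
      have : YF ν a + α q0 ν ν * p ν * p a = α q0 ν (a + ν) * p (a + ν) * p 0 := by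
        simp only [hYF]; ring
      rw [this]
      exact mul_nonneg (mul_nonneg (hαnn _ _ _) (hp _).le) (hp 0).le
    · intro z hz
      exact (hsum z hz).1
    · intro ν h1 h2 z hz
      have hS := ((hsum z hz).2 (-q0) hnq0E ν h1 h2).mul_right (p 0)
      apply hS.congr
      intro b
      simp only [hXF]
      ring
    · intro ν h1 h2 z hz
      have hS := ((hsum z hz).2 q0 hq0E ν h1 h2).mul_right (p 0)
      apply hS.congr
      intro a
      simp only [hYF]
      ring
    · exact hFE
  -- Step 4: conclusion
  refine ⟨fun ν => if ν ≤ νmax then α q0 ν ν * p ν / p 0 else 0, ?_, ?_⟩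
  · intro ν h1 h2
    simp only [if_pos h2]
    exact div_nonneg (mul_nonneg (hαnn _ _ _) (hp ν).le) (hp 0).le
  · intro ν m h1 hm
    by_cases hν : ν ≤ νmax
    · simp only [if_pos hν]
      have hY := hYzero ν h1 hν (m - ν)
      simp only [hYF] at hY
      rw [Nat.sub_add_cancel hm] at hY
      have hpm := (hp m).ne'
      have hp0 := (hp 0).ne'
      field_simp
      linear_combination hY
    · simp only [if_neg hν]
      rw [hνmax q0 ν m (by omega)]
      simp
end

section
/- Consider the continuous-time mass transport process on the torus Λ = (ℤ/Lℤ)^d (d ≥ 1, L ≥ 2) with a finite symmetric set of directions E ⊆ Λ∖{0} (q ∈ E ⟺ −q ∈ E), measurable rates α_q : [0,∞)² → [0,∞) with α_q(μ, m) = 0 unless 0 ≤ μ ≤ m, and a measurable single-site density p : [0,∞) → (0,∞). Suppose there exist measurable integrable functions g_q : [0,∞) → [0,∞), q ∈ E, such that α_q(μ, m) = g_q(μ)·p(m − μ)/p(m) for all q ∈ E and all 0 ≤ μ ≤ m. Then the product density is stationary: for every configuration m : Λ → [0,∞), ∑_{i∈Λ} ∑_{q∈E} ∫_0^{m_i} α_q(μ,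 m_i) dμ · ∏_{j∈Λ} p(m_j) = ∑_{i∈Λ} ∑_{q∈E} ∫_0^{m_i} α_{−q}(μ, m_{i+q} + μ) · ∏_{j∈Λ} p(m^{i,q,μ}_j) dμ. -/
open MeasureTheory

/-- The configuration obtained from `m` by moving mass `μ` from site `i` to site `i + q`
on the torus. -/
def updR {d L : ℕ} (m : (Fin d → ZMod L) → ℝ) (i q : Fin d → ZMod L) (μ : ℝ) :
    (Fin d → ZMod L) → ℝ :=
  fun j => if j = i then m i - μ else if j = i + q then m (i + q) + μ else m j

/-- Sufficiency for the continuous-time mass transport process: if the rates have the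
product form `α_q(μ,m) = g_q(μ) p(m−μ)/p(m)`, then the product density `∏_i p(m_i)` is
stationary, i.e. the master-equation identity holds at every configuration. -/
theorem mtp_product_density_stationary (d L : ℕ) (hd : 1 ≤ d) (hL : 2 ≤ L) [NeZero L]
    (E : Finset (Fin d → ZMod L)) (hE0 : (0 : Fin d → ZMod L) ∉ E)
    (hEsym : ∀ q ∈ E, -q ∈ E)
    (α : (Fin d → ZMod L) → ℝ → ℝ → ℝ)
    (hαmeas : ∀ q ∈ E, Measurable fun x : ℝ × ℝ => α q x.1 x.2)
    (hαnn : ∀ q (μ m : ℝ), 0 ≤ α q μ m)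
    (hαzero : ∀ q (μ m : ℝ), ¬(0 ≤ μ ∧ μ ≤ m) → α q μ m = 0)
    (p : ℝ → ℝ) (hpmeas : Measurable p) (hp : ∀ m : ℝ, 0 ≤ m → 0 < p m)
    (g : (Fin d → ZMod L) → ℝ → ℝ)
    (hgmeas : ∀ q ∈ E, Measurable (g q))
    (hgnn : ∀ q ∈ E, ∀ μ : ℝ, 0 ≤ μ → 0 ≤ g q μ)
    (hgint : ∀ q ∈ E, IntegrableOn (g q) (Set.Ici (0 : ℝ)) volume)
    (hform : ∀ q ∈ E, ∀ μ m : ℝ, 0 ≤ μ → μ ≤ m → α q μ m = g q μ * p (m - μ) / p m) :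
    ∀ m : (Fin d → ZMod L) → ℝ, (∀ i, 0 ≤ m i) →
      ∑ i : Fin d → ZMod L, ∑ q ∈ E,
          (∫ μ in (0 : ℝ)..(m i), α q μ (m i)) * ∏ j : Fin d → ZMod L, p (m j) =
        ∑ i : Fin d → ZMod L, ∑ q ∈ E,
          ∫ μ in (0 : ℝ)..(m i),
            α (-q) μ (m (i + q) + μ) * ∏ j : Fin d → ZMod L, p (updR m i q μ j) := by
  intro m hm
  refine Finset.sum_congr rfl fun i _ => ?_
  have key : ∀ q ∈ E,
      (∫ μ in (0 : ℝ)..(m i),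
        α (-q) μ (m (i + q) + μ) * ∏ j : Fin d → ZMod L, p (updR m i q μ j))
      = (∫ μ in (0 : ℝ)..(m i), α (-q) μ (m i)) * ∏ j : Fin d → ZMod L, p (m j) := by
    intro q hq
    have hqne : i ≠ i + q := by
      intro h
      apply hE0
      have : q = 0 := (left_eq_add).1 h
      rwa [this] at hq
    have hnegq : -q ∈ E := hEsym q hq
    rw [← intervalIntegral.integral_mul_const]
    apply intervalIntegral.integral_congr
    intro μ hμ
    rw [Set.uIcc_of_le (hm i)] at hμ
    obtain ⟨hμ0, hμm⟩ := hμ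
    have hsplit : ∀ f : (Fin d → ZMod L) → ℝ,
        ∏ j : Fin d → ZMod L, f j
          = f i * f (i + q) * ∏ j ∈ Finset.univ \ {i, i + q}, f j := by
      intro f
      rw [← Finset.prod_sdiff (Finset.subset_univ {i, i + q}), Finset.prod_pair hqne]
      ring
    have hud : ∀ j ∈ Finset.univ \ ({i, i + q} : Finset (Fin d → ZMod L)),
        p (updR m i q μ j) = p (m j) := by
      intro j hj
      simp only [Finset.mem_sdiff, Finset.mem_insert, Finset.mem_singleton] at hj
      push_neg at hj
      simp [updR, hj.2.1, hj.2.2]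
    have hprod1 : ∏ j : Fin d → ZMod L, p (updR m i q μ j)
        = p (m i - μ) * p (m (i + q) + μ) * ∏ j ∈ Finset.univ \ {i, i + q}, p (m j) := by
      rw [hsplit (fun j => p (updR m i q μ j)), Finset.prod_congr rfl hud]
      simp [updR, hqne.symm]
    have hprod2 : ∏ j : Fin d → ZMod L, p (m j)
        = p (m i) * p (m (i + q)) * ∏ j ∈ Finset.univ \ {i, i + q}, p (m j) :=
      hsplit (fun j => p (m j))
    have h1 : α (-q) μ (m (i + q) + μ)
        = g (-q) μ * p (m (i + q)) / p (m (i + q) + μ) := by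
      have := hform (-q) hnegq μ (m (i + q) + μ) hμ0 (by linarith [hm (i + q)])
      simpa using this
    have h2 : α (-q) μ (m i) = g (-q) μ * p (m i - μ) / p (m i) :=
      hform (-q) hnegq μ (m i) hμ0 hμm
    have hp1 : 0 < p (m i) := hp _ (hm i)
    have hp2 : 0 < p (m (i + q)) := hp _ (hm (i + q))
    have hp3 : 0 < p (m (i + q) + μ) := hp _ (by linarith [hm (i + q)])
    beta_reduce
    rw [hprod1, hprod2, h1, h2]
    field_simp
  rw [Finset.sum_congr rfl key]
  have : ∑ q ∈ E, (∫ μ in (0 : ℝ)..(m i), α q μ (m i))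
      = ∑ q ∈ E, (∫ μ in (0 : ℝ)..(m i), α (-q) μ (m i)) := by
    apply Finset.sum_nbij' (fun q => -q) (fun q => -q)
    · intro a ha; exact hEsym a ha
    · intro a ha; exact hEsym a ha
    · intro a _; simp
    · intro a _; simp
    · intro a _; simp
  rw [← Finset.sum_mul, ← Finset.sum_mul, this]
end
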